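/- arXiv:1312.3316 — 2 statements merged into one kernel-verified Lean document; each statement's English description precedes it below -/
import Mathlib

section
/- Assume R spans V. There is a unique algebra automorphism τ of H (the Iwahori–Matsumoto involution) with τ(t_{s_α})=−t_{s_α} for all α∈Π and τ(ω)=−ω for all ω∈V_ℂ. If X is an irreducible finite-dimensional H-module such that both X and the twist X∘τ are tempered, then every λ∈Ω(X) satisfies Re λ=0, i.e., the central character of X is purely imaginary. -/
/- Formalization of the setting of Barbasch–Ciubotaru, "Hermitian forms for
affine Hecke algebras": a reduced root system, Weyl group, parameters,
complexifications, and the graded affine Hecke algebra. -/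

noncomputable section

structure GHA where
  (V Vd VC VdC W H : Type)
  [addV : AddCommGroup V] [modV : Module ℝ V] [fdV : FiniteDimensional ℝ V]
  [addVd : AddCommGroup Vd] [modVd : Module ℝ Vd] [fdVd : FiniteDimensional ℝ Vd]
  [deqV : DecidableEq V] [deqW : DecidableEq W]
  [addVC : AddCommGroup VC] [modVC : Module ℂ VC]
  [addVdC : AddCommGroup VdC] [modVdC : Module ℂ VdC]
  [grpW : Group W] [finW : Fintype W]
  [ringH : Ring H] [algH : Algebra ℂ H]
  -- the perfect bilinear pairing between V and V∨
  pairR : V →ₗ[ℝ] Vd →ₗ[ℝ] ℝ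
  pair_nondeg_left : ∀ v : V, (∀ u : Vd, pairR v u = 0) → v = 0
  pair_nondeg_right : ∀ u : Vd, (∀ v : V, pairR v u = 0) → u = 0
  -- roots, coroots, and the bijection α ↦ α∨
  roots : Finset V
  corootsF : Finset Vd
  cv : V → Vd
  roots_ne_zero : ∀ α ∈ roots, α ≠ 0
  coroots_ne_zero : ∀ β ∈ corootsF, β ≠ 0
  cv_mem : ∀ α ∈ roots, cv α ∈ corootsF
  cv_injOn : Set.InjOn cv roots
  cv_surjOn : ∀ β ∈ corootsF, ∃ α ∈ roots, cv α = β
  pair_cv_self : ∀ α ∈ roots, pairR α (cv α) = 2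
  reflV_mem : ∀ α ∈ roots, ∀ β ∈ roots, β - pairR β (cv α) • α ∈ roots
  reflVd_mem : ∀ α ∈ roots, ∀ β ∈ corootsF, β - pairR α β • cv α ∈ corootsF
  reduced : ∀ α ∈ roots, (2 : ℝ) • α ∉ roots
  -- simple roots and positive roots
  simples : Finset V
  posRoots : Finset V
  simples_subset : simples ⊆ posRoots
  posRoots_subset : posRoots ⊆ roots
  roots_pos_or_neg : ∀ α ∈ roots, α ∈ posRoots ∨ -α ∈ posRoots
  posRoots_not_neg : ∀ α ∈ posRoots, -α ∉ posRoots
  simples_linearIndependent : LinearIndependent ℝ (fun β : {x // x ∈ simples} => (β : V))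
  posRoots_nonneg_comb : ∀ α ∈ posRoots, ∃ c : V → ℝ,
    (∀ β ∈ simples, 0 ≤ c β) ∧ α = ∑ β ∈ simples, c β • β
  -- the Weyl group, acting on V and V∨, generated by the reflections s_α
  s : V → W
  actV : W →* V ≃ₗ[ℝ] V
  actVd : W →* Vd ≃ₗ[ℝ] Vd
  actV_s : ∀ α ∈ roots, ∀ v : V, actV (s α) v = v - pairR v (cv α) • α
  actVd_s : ∀ α ∈ roots, ∀ u : Vd, actVd (s α) u = u - pairR α u • cv α
  act_pair : ∀ (w : W) (v : V) (u : Vd), pairR (actV w v) (actVd w u) = pairR v u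
  actV_faithful : ∀ w : W, (∀ v : V, actV w v = v) → w = 1
  gen_by_refl : Subgroup.closure (s '' roots) = (⊤ : Subgroup W)
  actV_roots : ∀ (w : W), ∀ α ∈ roots, actV w α ∈ roots
  -- the longest element
  w0 : W
  w0_neg : ∀ α ∈ posRoots, -(actV w0 α) ∈ posRoots
  w0_unique : ∀ w : W, (∀ α ∈ posRoots, -(actV w α) ∈ posRoots) → w = w0
  -- the parameter function k (extended W-invariantly to all roots)
  kpar : V → ℝ
  kpar_invariant : ∀ (w : W), ∀ α ∈ roots, kpar (actV w α) = kpar α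
  -- complexifications of V and V∨, with real and imaginary parts
  iV : V →+ VC
  iVd : Vd →+ VdC
  iV_smul : ∀ (r : ℝ) (v : V), iV (r • v) = (r : ℂ) • iV v
  iVd_smul : ∀ (r : ℝ) (u : Vd), iVd (r • u) = (r : ℂ) • iVd u
  reV : VC →+ V
  imV : VC →+ V
  reVd : VdC →+ Vd
  imVd : VdC →+ Vd
  reV_iV : ∀ v : V, reV (iV v) = v
  imV_iV : ∀ v : V, imV (iV v) = 0
  reVd_iVd : ∀ u : Vd, reVd (iVd u) = u
  imVd_iVd : ∀ u : Vd, imVd (iVd u) = 0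
  vc_decomp : ∀ x : VC, x = iV (reV x) + Complex.I • iV (imV x)
  vdc_decomp : ∀ y : VdC, y = iVd (reVd y) + Complex.I • iVd (imVd y)
  reV_real_smul : ∀ (r : ℝ) (x : VC), reV ((r : ℂ) • x) = r • reV x
  imV_real_smul : ∀ (r : ℝ) (x : VC), imV ((r : ℂ) • x) = r • imV x
  reVd_real_smul : ∀ (r : ℝ) (y : VdC), reVd ((r : ℂ) • y) = r • reVd y
  imVd_real_smul : ∀ (r : ℝ) (y : VdC), imVd ((r : ℂ) • y) = r • imVd y
  -- the complex bilinear extension of the pairing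
  pairC : VC → VdC → ℂ
  pairC_add_left : ∀ x x' y, pairC (x + x') y = pairC x y + pairC x' y
  pairC_add_right : ∀ x y y', pairC x (y + y') = pairC x y + pairC x y'
  pairC_smul_left : ∀ (c : ℂ) x y, pairC (c • x) y = c * pairC x y
  pairC_smul_right : ∀ (c : ℂ) x y, pairC x (c • y) = c * pairC x y
  pairC_compat : ∀ (v : V) (u : Vd), pairC (iV v) (iVd u) = (pairR v u : ℂ)
  -- the complexified Weyl group actions
  actVC : W →* VC ≃ₗ[ℂ] VC
  actVdC : W →* VdC ≃ₗ[ℂ] VdC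
  actVC_iV : ∀ (w : W) (v : V), actVC w (iV v) = iV (actV w v)
  actVdC_iVd : ∀ (w : W) (u : Vd), actVdC w (iVd u) = iVd (actVd w u)
  -- the graded affine Hecke algebra H: elements t_w and the subalgebra S(V_ℂ)
  t : W → H
  t_one : t 1 = 1
  t_mul : ∀ w w', t w * t w' = t (w * w')
  θ : VC → H
  θ_add : ∀ x y, θ (x + y) = θ x + θ y
  θ_smul : ∀ (c : ℂ) (x : VC), θ (c • x) = c • θ x
  θ_comm : ∀ x y, θ x * θ y = θ y * θ x
  -- the graded Hecke algebra cross relation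
  cross_rel : ∀ α ∈ simples, ∀ ω : VC,
    θ ω * t (s α) = t (s α) * θ (actVC (s α) ω)
      + algebraMap ℂ H ((kpar α : ℂ) * pairC ω (iVd (cv α)))
  -- H ≅ ℂ[W] ⊗ S(V_ℂ) as a (ℂ[W], S(V_ℂ))-bimodule
  pbw_span : ∀ h : H, ∃ c : W → Algebra.adjoin ℂ (Set.range θ),
    h = ∑ w : W, t w * (c w : H)
  pbw_indep : ∀ c : W → Algebra.adjoin ℂ (Set.range θ),
    ∑ w : W, t w * (c w : H) = 0 → ∀ w, c w = 0
  -- the subalgebra generated by θ(V_ℂ) is the symmetric algebra S(V_ℂ)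
  poly_univ : ∀ (B : Type) [CommRing B] [Algebra ℂ B] (f : VC → B),
    (∀ x y, f (x + y) = f x + f y) → (∀ (c : ℂ) x, f (c • x) = c • f x) →
    ∃! g : Algebra.adjoin ℂ (Set.range θ) →ₐ[ℂ] B,
      ∀ x : VC, g ⟨θ x, Algebra.subset_adjoin ⟨x, rfl⟩⟩ = f x

attribute [instance] GHA.addV GHA.modV GHA.fdV GHA.addVd GHA.modVd GHA.fdVd
  GHA.deqV GHA.deqW GHA.addVC GHA.modVC GHA.addVdC GHA.modVdC GHA.grpW GHA.finW
  GHA.ringH GHA.algH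

namespace GHA

/-- Complex conjugation on V_ℂ. -/
def conjVC (D : GHA) (x : D.VC) : D.VC := D.iV (D.reV x) - Complex.I • D.iV (D.imV x)

/-- Complex conjugation on V∨_ℂ. -/
def conjVdC (D : GHA) (y : D.VdC) : D.VdC := D.iVd (D.reVd y) - Complex.I • D.iVd (D.imVd y)

/-- The bullet operation: conjugate-linear anti-automorphism with t_w ↦ t_{w⁻¹},
ω ↦ conj ω. -/
structure IsBullet (D : GHA) (f : D.H → D.H) : Prop where
  map_add : ∀ x y, f (x + y) = f x + f y
  map_smul : ∀ (c : ℂ) (x : D.H), f (c • x) = (starRingEnd ℂ) c • f x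
  map_mul : ∀ x y, f (x * y) = f y * f x
  map_one : f 1 = 1
  map_t : ∀ w : D.W, f (D.t w) = D.t w⁻¹
  map_theta : ∀ x : D.VC, f (D.θ x) = D.θ (D.conjVC x)

/-- The star operation: conjugate-linear anti-automorphism with t_w ↦ t_{w⁻¹},
ω ↦ −t_{w₀}·conj(w₀(ω))·t_{w₀}. -/
structure IsStar (D : GHA) (f : D.H → D.H) : Prop where
  map_add : ∀ x y, f (x + y) = f x + f y
  map_smul : ∀ (c : ℂ) (x : D.H), f (c • x) = (starRingEnd ℂ) c • f x
  map_mul : ∀ x y, f (x * y) = f y * f x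
  map_one : f 1 = 1
  map_t : ∀ w : D.W, f (D.t w) = D.t w⁻¹
  map_theta : ∀ x : D.VC,
    f (D.θ x) = -(D.t D.w0 * D.θ (D.conjVC (D.actVC D.w0 x)) * D.t D.w0)

/-- The automorphism δ: t_w ↦ t_{w₀ww₀}, ω ↦ −w₀(ω). -/
structure IsDelta (D : GHA) (f : D.H → D.H) : Prop where
  map_add : ∀ x y, f (x + y) = f x + f y
  map_smul : ∀ (c : ℂ) (x : D.H), f (c • x) = c • f x
  map_mul : ∀ x y, f (x * y) = f x * f y
  map_one : f 1 = 1
  map_t : ∀ w : D.W, f (D.t w) = D.t (D.w0 * w * D.w0)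
  map_theta : ∀ x : D.VC, f (D.θ x) = -(D.θ (D.actVC D.w0 x))

/-- The standing assumption k_{−w₀(α)} = k_α for α ∈ Π. -/
def KSymm (D : GHA) : Prop := ∀ α ∈ D.simples, D.kpar (-(D.actV D.w0 α)) = D.kpar α

section Forms

variable {X : Type} [AddCommGroup X] [Module ℂ X]

/-- Sesquilinear form (conjugate-linear in the first variable). -/
def SesqForm (B : X → X → ℂ) : Prop :=
  (∀ x x' y, B (x + x') y = B x y + B x' y) ∧
  (∀ x y y', B x (y + y') = B x y + B x y') ∧
  (∀ (c : ℂ) (x y : X), B (c • x) y = (starRingEnd ℂ) c * B x y) ∧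
  (∀ (c : ℂ) (x y : X), B x (c • y) = c * B x y)

/-- Hermitian form. -/
def HermForm (B : X → X → ℂ) : Prop := ∀ x y, B x y = (starRingEnd ℂ) (B y x)

/-- κ-invariance of a form: ⟨π(h)x, y⟩ = ⟨x, π(κ(h))y⟩. -/
def InvForm (D : GHA) (π : D.H →ₐ[ℂ] Module.End ℂ X) (κ : D.H → D.H)
    (B : X → X → ℂ) : Prop :=
  ∀ (h : D.H) (x y : X), B (π h x) y = B x (π (κ h) y)

end Forms

/-- Irreducibility of a representation of a ℂ-algebra A on X. -/
def IsIrrRep (A : Type) [Ring A] [Algebra ℂ A] {X : Type} [AddCommGroup X]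
    [Module ℂ X] (π : A →ₐ[ℂ] Module.End ℂ X) : Prop :=
  Nontrivial X ∧ ∀ U : Submodule ℂ X, (∀ (a : A), ∀ x ∈ U, π a x ∈ U) → U = ⊥ ∨ U = ⊤

/-- Generalized weight space for a commuting family of operators indexed by V_ℂ. -/
def wtAux (D : GHA) {X : Type} [AddCommGroup X] [Module ℂ X]
    (T : D.VC → Module.End ℂ X) (lam : D.VdC) : Submodule ℂ X where
  carrier := {x | ∀ ω : D.VC, ∃ n : ℕ,
    ((T ω - D.pairC ω lam • (1 : Module.End ℂ X)) ^ n) x = 0}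
  zero_mem' := fun ω => ⟨1, by simp⟩
  add_mem' := by
    intro a b ha hb
    intro ω
    obtain ⟨n, hn⟩ := ha ω
    obtain ⟨m, hm⟩ := hb ω
    refine ⟨n + m, ?_⟩
    have hA : ((T ω - D.pairC ω lam • (1 : Module.End ℂ X)) ^ (n + m)) a = 0 := by
      rw [add_comm, pow_add, Module.End.mul_apply, hn, map_zero]
    have hB : ((T ω - D.pairC ω lam • (1 : Module.End ℂ X)) ^ (n + m)) b = 0 := by
      rw [pow_add, Module.End.mul_apply, hm, map_zero]
    rw [map_add, hA, hB, add_zero]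
  smul_mem' := by
    intro c a ha ω
    obtain ⟨n, hn⟩ := ha ω
    exact ⟨n, by rw [map_smul, hn, smul_zero]⟩

/-- Generalized A-weight space X_λ of an H-module. -/
def wtH (D : GHA) {X : Type} [AddCommGroup X] [Module ℂ X]
    (π : D.H →ₐ[ℂ] Module.End ℂ X) (lam : D.VdC) : Submodule ℂ X :=
  D.wtAux (fun ω => π (D.θ ω)) lam

/-- The set Ω(X) of A-weights of an H-module. -/
def OmegaH (D : GHA) {X : Type} [AddCommGroup X] [Module ℂ X]
    (π : D.H →ₐ[ℂ] Module.End ℂ X) : Set D.VdC :=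
  {lam | D.wtH π lam ≠ ⊥}

/-- Casselman's criterion for temperedness. -/
def IsTempered (D : GHA) {X : Type} [AddCommGroup X] [Module ℂ X]
    (π : D.H →ₐ[ℂ] Module.End ℂ X) : Prop :=
  ∀ lam ∈ D.OmegaH π, ∀ ω : D.V,
    (∀ α ∈ D.simples, 0 < D.pairR ω (D.cv α)) → D.pairR ω (D.reVd lam) ≤ 0

section Parabolic

variable (D : GHA) (PiM : Finset D.V)

/-- The parabolic subgroup W_M. -/
def WM : Subgroup D.W := Subgroup.closure (D.s '' (PiM : Set D.V))

/-- The positive roots R⁺_M lying in the span of Π_M. -/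
def RplusM : Set D.V :=
  {α | α ∈ D.posRoots ∧ α ∈ Submodule.span ℝ (PiM : Set D.V)}

/-- x is the minimal length representative of x·W_M, i.e. x(R⁺_M) ⊆ R⁺. -/
def IsMinRep (x : D.W) : Prop := ∀ α ∈ D.RplusM PiM, D.actV x α ∈ D.posRoots

/-- The set J_M of minimal length coset representatives. -/
abbrev JM : Type := {x : D.W // D.IsMinRep PiM x}

/-- The parabolic subalgebra H_M. -/
def HM : Subalgebra ℂ D.H :=
  Algebra.adjoin ℂ (Set.range D.θ ∪ (D.t '' ((D.WM PiM : Subgroup D.W) : Set D.W)))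

/-- t_w as an element of H_M, for w ∈ W_M. -/
def tM (w : D.W) (hw : w ∈ D.WM PiM) : D.HM PiM :=
  ⟨D.t w, Algebra.subset_adjoin (Or.inr ⟨w, hw, rfl⟩)⟩

/-- θ(ω) as an element of H_M. -/
def θM (x : D.VC) : D.HM PiM :=
  ⟨D.θ x, Algebra.subset_adjoin (Or.inl ⟨x, rfl⟩)⟩

/-- Π_{δ(M)} = −w₀(Π_M). -/
def deltaSimples : Finset D.V := PiM.image (fun α => -(D.actV D.w0 α))

/-- w is the longest element of W_M. -/
def IsLongest (w : D.W) : Prop :=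
  w ∈ D.WM PiM ∧ ∀ α ∈ D.RplusM PiM, -(D.actV w α) ∈ D.RplusM PiM

end Parabolic

/-- The unique factorization z = c_M(z)·m_M(z) with c_M(z) minimal in z·W_M and
m_M(z) ∈ W_M. -/
structure CosetData (D : GHA) (PiM : Finset D.V) where
  c : D.W → D.W
  m : D.W → D.W
  c_min : ∀ z, D.IsMinRep PiM (c z)
  m_mem : ∀ z, m z ∈ D.WM PiM
  factor : ∀ z, z = c z * m z
  uniq : ∀ (z c' m' : D.W), D.IsMinRep PiM c' → m' ∈ D.WM PiM → z = c' * m' →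
    c' = c z ∧ m' = m z

/-- The defining formulas for the H-action on the parabolically induced module
X(M,σ) = H ⊗_{H_M} U, realized on ⊕_{x ∈ J_M} U. -/
def IsInducedAction (D : GHA) (PiM : Finset D.V) (cd : CosetData D PiM)
    {U : Type} [AddCommGroup U] [Module ℂ U]
    (σ : D.HM PiM →ₐ[ℂ] Module.End ℂ U)
    (πI : D.H →ₐ[ℂ] Module.End ℂ (D.JM PiM → U)) : Prop :=
  (∀ (z : D.W) (x : D.JM PiM) (v : U),
      πI (D.t z) (Pi.single x v) =
        Pi.single (⟨cd.c (z * x.1), cd.c_min _⟩ : D.JM PiM)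
          (σ (D.tM PiM (cd.m (z * x.1)) (cd.m_mem _)) v)) ∧
  (∀ (ω : D.VC) (x : D.JM PiM) (v : U),
      πI (D.θ ω) (Pi.single x v) =
        Pi.single x (σ (D.θM PiM (D.actVC x.1⁻¹ ω)) v) +
          ∑ β ∈ D.posRoots.filter (fun β => -(D.actV x.1⁻¹ β) ∈ D.posRoots),
            ((D.kpar β : ℂ) * D.pairC ω (D.iVd (D.cv β))) •
              (Pi.single (⟨cd.c (D.s β * x.1), cd.c_min _⟩ : D.JM PiM)
                (σ (D.tM PiM (cd.m (D.s β * x.1)) (cd.m_mem _)) v) : D.JM PiM → U))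

end GHA


namespace GHA

open Finset

variable (D : GHA)

/-- An auxiliary positive definite bilinear form on V. -/
def B0 : D.V →ₗ[ℝ] D.V →ₗ[ℝ] ℝ :=
  LinearMap.mk₂ ℝ
    (fun u v => ∑ i, (Module.finBasis ℝ D.V).repr u i * (Module.finBasis ℝ D.V).repr v i)
    (by intro m₁ m₂ n; simp [map_add, Finsupp.add_apply, add_mul, Finset.sum_add_distrib])
    (by intro c m n; simp [map_smul, Finsupp.smul_apply, smul_eq_mul, Finset.mul_sum, mul_assoc])
    (by intro m n₁ n₂; simp [map_add, Finsupp.add_apply, mul_add, Finset.sum_add_distrib])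
    (by intro c m n; simp only [map_smul, Finsupp.smul_apply, smul_eq_mul, Finset.mul_sum]
        exact Finset.sum_congr rfl fun i _ => by ring)

lemma B0_apply (u v : D.V) : D.B0 u v =
    ∑ i, (Module.finBasis ℝ D.V).repr u i * (Module.finBasis ℝ D.V).repr v i := rfl

lemma B0_nonneg (v : D.V) : 0 ≤ D.B0 v v := by
  rw [B0_apply]
  exact Finset.sum_nonneg fun i _ => mul_self_nonneg _

lemma B0_pos {v : D.V} (hv : v ≠ 0) : 0 < D.B0 v v := by
  have h : (Module.finBasis ℝ D.V).repr v ≠ 0 := by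
    intro h0
    exact hv (by simpa using congrArg (Module.finBasis ℝ D.V).repr.symm h0)
  obtain ⟨i, hi⟩ : ∃ i, (Module.finBasis ℝ D.V).repr v i ≠ 0 := by
    by_contra hcon
    push_neg at hcon
    exact h (Finsupp.ext hcon)
  have : ∀ j ∈ Finset.univ, (0:ℝ) ≤ (Module.finBasis ℝ D.V).repr v j *
      (Module.finBasis ℝ D.V).repr v j := fun j _ => mul_self_nonneg _
  have hlt : 0 < (Module.finBasis ℝ D.V).repr v i * (Module.finBasis ℝ D.V).repr v i :=
    mul_self_pos.mpr hi
  calc (0:ℝ) < _ := hlt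
    _ ≤ D.B0 v v := by
      rw [B0_apply]
      exact Finset.single_le_sum (f := fun j => (Module.finBasis ℝ D.V).repr v j *
        (Module.finBasis ℝ D.V).repr v j) (fun j _ => mul_self_nonneg _) (Finset.mem_univ i)

/-- The W-invariant positive definite bilinear form on V. -/
def BB : D.V →ₗ[ℝ] D.V →ₗ[ℝ] ℝ :=
  LinearMap.mk₂ ℝ (fun u v => ∑ w : D.W, D.B0 (D.actV w u) (D.actV w v))
    (by intro m₁ m₂ n; simp [Finset.sum_add_distrib])
    (by intro c m n; simp [Finset.mul_sum])
    (by intro m n₁ n₂; simp [Finset.sum_add_distrib])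
    (by intro c m n; simp [Finset.mul_sum])

lemma BB_apply (u v : D.V) : D.BB u v = ∑ w : D.W, D.B0 (D.actV w u) (D.actV w v) := rfl

lemma BB_symm (u v : D.V) : D.BB u v = D.BB v u := by
  simp only [BB_apply]
  exact Finset.sum_congr rfl fun w _ => by simp [B0, mul_comm]

lemma BB_pos {v : D.V} (hv : v ≠ 0) : 0 < D.BB v v := by
  have h1 : D.B0 (D.actV 1 v) (D.actV 1 v) ≤ D.BB v v := by
    rw [BB_apply]
    exact Finset.single_le_sum (f := fun w => D.B0 (D.actV w v) (D.actV w v))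
      (fun w _ => D.B0_nonneg _) (Finset.mem_univ (1 : D.W))
  have h2 : D.actV 1 v = v := by rw [map_one]; rfl
  rw [h2] at h1
  exact lt_of_lt_of_le (D.B0_pos hv) h1

lemma actV_mul_apply (w g : D.W) (v : D.V) :
    D.actV w (D.actV g v) = D.actV (w * g) v := by rw [map_mul]; rfl

lemma BB_inv (g : D.W) (u v : D.V) : D.BB (D.actV g u) (D.actV g v) = D.BB u v := by
  simp only [BB_apply, actV_mul_apply]
  exact Equiv.sum_comp (Equiv.mulRight g) (fun w => D.B0 (D.actV w u) (D.actV w v))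

lemma sα_neg {α : D.V} (hα : α ∈ D.roots) : D.actV (D.s α) α = -α := by
  rw [D.actV_s α hα, D.pair_cv_self α hα, two_smul]
  abel

lemma pair_BB {α : D.V} (hα : α ∈ D.roots) (v : D.V) :
    D.pairR v (D.cv α) * D.BB α α = 2 * D.BB v α := by
  have h1 : D.BB (D.actV (D.s α) v) (D.actV (D.s α) α) = D.BB v α := D.BB_inv _ _ _
  rw [D.sα_neg hα, D.actV_s α hα] at h1
  simp only [map_sub, map_smul, map_neg, LinearMap.sub_apply, LinearMap.smul_apply,
    smul_eq_mul] at h1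
  linarith

lemma sα_invol {α : D.V} (hα : α ∈ D.roots) (v : D.V) :
    D.actV (D.s α) (D.actV (D.s α) v) = v := by
  rw [D.actV_s α hα, D.actV_s α hα]
  simp only [map_sub, map_smul, LinearMap.sub_apply, LinearMap.smul_apply, smul_eq_mul,
    D.pair_cv_self α hα]
  module

lemma s_mul_self {α : D.V} (hα : α ∈ D.roots) : D.s α * D.s α = 1 := by
  apply D.actV_faithful
  intro v
  rw [← D.actV_mul_apply, D.sα_invol hα]

lemma s_inv {α : D.V} (hα : α ∈ D.roots) : (D.s α)⁻¹ = D.s α :=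
  inv_eq_of_mul_eq_one_left (D.s_mul_self hα)

lemma neg_mem_roots {β : D.V} (hβ : β ∈ D.roots) : -β ∈ D.roots := by
  have := D.reflV_mem β hβ β hβ
  rw [D.pair_cv_self β hβ, two_smul] at this
  simpa using this

lemma simple_comb_zero (c : D.V → ℝ) (h : ∑ γ ∈ D.simples, c γ • γ = 0) :
    ∀ γ ∈ D.simples, c γ = 0 := by
  intro γ hγ
  have hli := linearIndependent_iff'.mp D.simples_linearIndependent Finset.univ
    (fun i => c i.1)
  have hsum : ∑ i : {x // x ∈ D.simples}, c i.1 • (i.1 : D.V) = 0 := by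
    rw [← h]; exact Finset.sum_coe_sort D.simples (fun γ => c γ • γ)
  exact hli hsum ⟨γ, hγ⟩ (Finset.mem_univ _)

end GHA

namespace GHA

open Finset

variable (D : GHA)

lemma simple_root {α : D.V} (hα : α ∈ D.simples) : α ∈ D.roots :=
  D.posRoots_subset (D.simples_subset hα)

lemma root_ne_zero' {β : D.V} (hβ : β ∈ D.roots) : β ≠ 0 := D.roots_ne_zero β hβ

/-- If a simple reflection sends a positive root to a non-positive root, the root is
a positive multiple of the simple root. -/
lemma prop_of_not_pos {α : D.V} (hα : α ∈ D.simples) {β : D.V} (hβ : β ∈ D.posRoots)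
    (hneg : D.actV (D.s α) β ∉ D.posRoots) : ∃ r : ℝ, 0 < r ∧ β = r • α := by
  have hαr : α ∈ D.roots := D.simple_root hα
  have hβr : β ∈ D.roots := D.posRoots_subset hβ
  set tt := D.pairR β (D.cv α) with htt
  have hγr : β - tt • α ∈ D.roots := D.reflV_mem α hαr β hβr
  have hact : D.actV (D.s α) β = β - tt • α := D.actV_s α hαr β
  rw [hact] at hneg
  have hnegpos : -(β - tt • α) ∈ D.posRoots := by
    rcases D.roots_pos_or_neg _ hγr with h | h
    · exact absurd h hneg
    · exact h
  obtain ⟨c, hc0, hcomb⟩ := D.posRoots_nonneg_comb β hβ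
  obtain ⟨d, hd0, hdcomb⟩ := D.posRoots_nonneg_comb _ hnegpos
  have hzero : ∑ γ ∈ D.simples, (c γ + d γ - (if γ = α then tt else 0)) • γ = 0 := by
    have hite : ∑ γ ∈ D.simples, (if γ = α then tt else 0) • γ = tt • α := by
      rw [Finset.sum_eq_single_of_mem α hα]
      · simp
      · intro γ _ hne; simp [hne]
    have : ∑ γ ∈ D.simples, (c γ + d γ - (if γ = α then tt else 0)) • γ =
        (∑ γ ∈ D.simples, c γ • γ) + (∑ γ ∈ D.simples, d γ • γ) -
          ∑ γ ∈ D.simples, (if γ = α then tt else 0) • γ := by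
      rw [← Finset.sum_add_distrib, ← Finset.sum_sub_distrib]
      exact Finset.sum_congr rfl fun γ _ => by rw [sub_smul, add_smul]
    rw [this, hite, ← hcomb, ← hdcomb]
    abel
  have hkey := D.simple_comb_zero _ hzero
  have hcγ : ∀ γ ∈ D.simples, γ ≠ α → c γ = 0 := by
    intro γ hγ hne
    have := hkey γ hγ
    simp only [hne, if_neg] at this
    have := this
    have h1 : c γ + d γ = 0 := by simpa [hne] using hkey γ hγ
    linarith [hc0 γ hγ, hd0 γ hγ]
  have hβeq : β = c α • α := by
    rw [hcomb, Finset.sum_eq_single_of_mem α hα]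
    intro γ hγ hne
    rw [hcγ γ hγ hne, zero_smul]
  refine ⟨c α, ?_, hβeq⟩
  rcases lt_or_eq_of_le (hc0 α hα) with h | h
  · exact h
  · exfalso
    exact D.root_ne_zero' hβr (by rw [hβeq, ← h, zero_smul])

/-- Twice the sum of the positive roots. -/
def omega0 : D.V := ∑ β ∈ D.posRoots, β

lemma omega0_dominant {α : D.V} (hα : α ∈ D.simples) : 0 < D.pairR D.omega0 (D.cv α) := by
  classical
  have hαr : α ∈ D.roots := D.simple_root hα
  set p := D.pairR.flip (D.cv α) with hp
  have hpapp : ∀ v, p v = D.pairR v (D.cv α) := fun v => rfl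
  have hsum : D.pairR D.omega0 (D.cv α) = ∑ β ∈ D.posRoots, p β := by
    rw [← hpapp, omega0, map_sum]
  set Q := D.posRoots.filter (fun β => D.actV (D.s α) β ∈ D.posRoots) with hQ
  set P := D.posRoots.filter (fun β => ¬ D.actV (D.s α) β ∈ D.posRoots) with hP
  have hsplit : ∑ β ∈ Q, p β + ∑ β ∈ P, p β = ∑ β ∈ D.posRoots, p β :=
    Finset.sum_filter_add_sum_filter_not _ _ _
  have hQ0 : ∑ β ∈ Q, p β = 0 := by
    refine Finset.sum_involution (fun β _ => D.actV (D.s α) β) ?_ ?_ ?_ ?_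
    · intro β hβ
      have hβr : β ∈ D.roots := D.posRoots_subset (Finset.mem_filter.mp hβ).1
      rw [hpapp, hpapp, D.actV_s α hαr β]
      simp only [map_sub, map_smul, LinearMap.sub_apply, LinearMap.smul_apply, smul_eq_mul,
        D.pair_cv_self α hαr]
      ring
    · intro β hβ hne
      have hβr : β ∈ D.roots := D.posRoots_subset (Finset.mem_filter.mp hβ).1
      rw [D.actV_s α hαr β]
      intro heq
      have : D.pairR β (D.cv α) • α = 0 := by
        have := sub_eq_self.mp heq
        exact this
      rcases smul_eq_zero.mp this with h | h
      · rw [hpapp] at hne; exact hne h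
      · exact D.root_ne_zero' hαr h
    · intro β hβ
      obtain ⟨hβp, hβs⟩ := Finset.mem_filter.mp hβ
      have hβr : β ∈ D.roots := D.posRoots_subset hβp
      refine Finset.mem_filter.mpr ⟨hβs, ?_⟩
      rw [D.sα_invol hαr]
      exact hβp
    · intro β hβ
      have hβr : β ∈ D.roots := D.posRoots_subset (Finset.mem_filter.mp hβ).1
      exact D.sα_invol hαr β
  have hPpos : ∀ β ∈ P, 0 < p β := by
    intro β hβ
    obtain ⟨hβp, hβs⟩ := Finset.mem_filter.mp hβ
    obtain ⟨r, hr, hβeq⟩ := D.prop_of_not_pos hα hβp hβs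
    rw [hpapp, hβeq, map_smul, LinearMap.smul_apply, smul_eq_mul, D.pair_cv_self α hαr]
    linarith
  have hPne : P.Nonempty := by
    refine ⟨α, Finset.mem_filter.mpr ⟨D.simples_subset hα, ?_⟩⟩
    rw [D.sα_neg hαr]
    exact D.posRoots_not_neg α (D.simples_subset hα)
  have hPsum : 0 < ∑ β ∈ P, p β := Finset.sum_pos hPpos hPne
  rw [hsum, ← hsplit, hQ0, zero_add]
  exact hPsum

lemma BB_omega0_pos {γ : D.V} (hγ : γ ∈ D.simples) : 0 < D.BB γ D.omega0 := by
  have hγr : γ ∈ D.roots := D.simple_root hγ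
  have h := D.pair_BB hγr D.omega0
  have h1 : 0 < D.BB γ γ := D.BB_pos (D.root_ne_zero' hγr)
  have h2 : 0 < D.pairR D.omega0 (D.cv γ) := D.omega0_dominant hγ
  have h3 : 0 < D.BB D.omega0 γ := by nlinarith
  rw [D.BB_symm]
  exact h3

lemma s_eq_of_smul {α β : D.V} (hα : α ∈ D.roots) (hβ : β ∈ D.roots) {r : ℝ} (hr : r ≠ 0)
    (heq : β = r • α) : D.s β = D.s α := by
  have hBα : D.BB α α ≠ 0 := ne_of_gt (D.BB_pos (D.root_ne_zero' hα))
  have hpair : ∀ v, D.pairR v (D.cv β) * r = D.pairR v (D.cv α) := by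
    intro v
    have h1 := D.pair_BB hβ v
    have h2 := D.pair_BB hα v
    have e1 : D.BB β β = r * (r * D.BB α α) := by
      rw [heq]; simp [map_smul, LinearMap.smul_apply, smul_eq_mul]
    have e2 : D.BB v β = r * D.BB v α := by
      rw [heq]; simp [map_smul, LinearMap.smul_apply, smul_eq_mul]
    rw [e1, e2] at h1
    have h4 : (D.pairR v (D.cv β) * r) * (r * D.BB α α) =
        D.pairR v (D.cv α) * (r * D.BB α α) := by linear_combination h1 - r * h2
    exact mul_right_cancel₀ (mul_ne_zero hr hBα) h4
  have hv : ∀ v, D.actV (D.s β) v = D.actV (D.s α) v := by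
    intro v
    rw [D.actV_s β hβ, D.actV_s α hα]
    rw [show (D.pairR v) (D.cv β) • β = ((D.pairR v) (D.cv β) * r) • α from by
      rw [heq, smul_smul], hpair v]
  have hone : D.s β * D.s α = 1 := by
    apply D.actV_faithful
    intro v
    rw [← D.actV_mul_apply, ← hv, D.sα_invol hβ]
  have := inv_eq_of_mul_eq_one_left hone
  rw [D.s_inv hα] at this
  exact this.symm

lemma s_conj (w : D.W) {β : D.V} (hβ : β ∈ D.roots) :
    D.s (D.actV w β) = w * D.s β * w⁻¹ := by
  have hwβ : D.actV w β ∈ D.roots := D.actV_roots w β hβ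
  have hBβ : D.BB β β ≠ 0 := ne_of_gt (D.BB_pos (D.root_ne_zero' hβ))
  have hwinv : ∀ v : D.V, D.actV w (D.actV w⁻¹ v) = v := by
    intro v
    rw [D.actV_mul_apply, mul_inv_cancel]
    rw [map_one]; rfl
  have hpair : ∀ v, D.pairR v (D.cv (D.actV w β)) = D.pairR (D.actV w⁻¹ v) (D.cv β) := by
    intro v
    have h1 := D.pair_BB hwβ v
    have h2 := D.pair_BB hβ (D.actV w⁻¹ v)
    have hBw : D.BB (D.actV w β) (D.actV w β) = D.BB β β := D.BB_inv w β β
    have hvw : D.BB v (D.actV w β) = D.BB (D.actV w⁻¹ v) β := by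
      conv_lhs => rw [← hwinv v]
      exact D.BB_inv w _ _
    rw [hBw, hvw] at h1
    have := h1.trans h2.symm
    exact mul_right_cancel₀ hBβ this
  have hone : (w * D.s β * w⁻¹) * D.s (D.actV w β) = 1 := by
    apply D.actV_faithful
    intro v
    rw [← D.actV_mul_apply, D.actV_s _ hwβ]
    have : D.actV (w * D.s β * w⁻¹) (v - D.pairR v (D.cv (D.actV w β)) • D.actV w β)
        = v := by
      rw [← D.actV_mul_apply, ← D.actV_mul_apply]
      have hlin : D.actV w⁻¹ (v - D.pairR v (D.cv (D.actV w β)) • D.actV w β)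
          = D.actV w⁻¹ v - D.pairR (D.actV w⁻¹ v) (D.cv β) • β := by
        rw [map_sub, map_smul, hpair v, D.actV_mul_apply w⁻¹ w, inv_mul_cancel, map_one]
        rfl
      rw [hlin, D.actV_s β hβ]
      simp only [map_sub, map_smul, LinearMap.sub_apply, LinearMap.smul_apply, smul_eq_mul,
        D.pair_cv_self β hβ]
      rw [hwinv v]
      module
    exact this
  have h2 := inv_eq_of_mul_eq_one_left hone
  rw [D.s_inv hwβ] at h2
  exact h2

lemma s_mem_closure {β : D.V} (hβ : β ∈ D.roots) :
    D.s β ∈ Subgroup.closure (D.s '' (D.simples : Set D.V)) := by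
  classical
  set W0 := Subgroup.closure (D.s '' (D.simples : Set D.V)) with hW0
  have hsimple : ∀ γ ∈ D.simples, D.s γ ∈ W0 := by
    intro γ hγ
    exact Subgroup.subset_closure ⟨γ, by simpa using hγ, rfl⟩
  have hpos : ∀ β ∈ D.posRoots, D.s β ∈ W0 := by
    intro β hβp
    by_contra hcon
    set S := D.posRoots.filter (fun β => D.s β ∉ W0) with hS
    have hSne : S.Nonempty := ⟨β, Finset.mem_filter.mpr ⟨hβp, hcon⟩⟩
    obtain ⟨β₀, hβ₀S, hmin⟩ := S.exists_min_image (fun β => D.BB β D.omega0) hSne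
    obtain ⟨hβ₀p, hβ₀n⟩ := Finset.mem_filter.mp hβ₀S
    have hβ₀r : β₀ ∈ D.roots := D.posRoots_subset hβ₀p
    have hβ₀0 : β₀ ≠ 0 := D.root_ne_zero' hβ₀r
    obtain ⟨γ, hγ, hBpos⟩ : ∃ γ ∈ D.simples, 0 < D.BB β₀ γ := by
      by_contra hcon2
      push_neg at hcon2
      obtain ⟨c, hc0, hcomb⟩ := D.posRoots_nonneg_comb β₀ hβ₀p
      have : D.BB β₀ β₀ ≤ 0 := by
        calc D.BB β₀ β₀ = D.BB β₀ (∑ γ ∈ D.simples, c γ • γ) := by rw [← hcomb]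
          _ = ∑ γ ∈ D.simples, c γ * D.BB β₀ γ := by
              rw [map_sum]
              exact Finset.sum_congr rfl fun γ _ => by rw [map_smul, smul_eq_mul]
          _ ≤ 0 := Finset.sum_nonpos fun γ hγ =>
              mul_nonpos_of_nonneg_of_nonpos (hc0 γ hγ) (hcon2 γ hγ)
      linarith [D.BB_pos hβ₀0]
    have hγr : γ ∈ D.roots := D.simple_root hγ
    have htpos : 0 < D.pairR β₀ (D.cv γ) := by
      have h1 := D.pair_BB hγr β₀
      have h2 : 0 < D.BB γ γ := D.BB_pos (D.root_ne_zero' hγr)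
      nlinarith [D.BB_symm β₀ γ]
    by_cases hprop : ∃ r : ℝ, β₀ = r • γ
    · obtain ⟨r, hr⟩ := hprop
      have hr0 : r ≠ 0 := by
        intro h0
        exact hβ₀0 (by rw [hr, h0, zero_smul])
      exact hβ₀n (by rw [D.s_eq_of_smul hγr hβ₀r hr0 hr]; exact hsimple γ hγ)
    · set β' := D.actV (D.s γ) β₀ with hβ'
      have hβ'p : β' ∈ D.posRoots := by
        by_contra hcon3
        obtain ⟨r, hr, hreq⟩ := D.prop_of_not_pos hγ hβ₀p hcon3
        exact hprop ⟨r, hreq⟩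
      have hβ'n : D.s β' ∉ W0 := by
        intro hmem
        apply hβ₀n
        have hconj := D.s_conj (D.s γ) hβ₀r
        -- s β' = s γ * s β₀ * (s γ)⁻¹
        have : D.s β₀ = (D.s γ)⁻¹ * D.s β' * D.s γ := by
          rw [← hβ'] at hconj
          rw [hconj]
          group
        rw [this]
        exact mul_mem (mul_mem (inv_mem (hsimple γ hγ)) hmem) (hsimple γ hγ)
      have hβ'S : β' ∈ S := Finset.mem_filter.mpr ⟨hβ'p, hβ'n⟩
      have hlt : D.BB β' D.omega0 < D.BB β₀ D.omega0 := by
        rw [hβ', D.actV_s γ hγr]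
        simp only [map_sub, map_smul, LinearMap.sub_apply, LinearMap.smul_apply, smul_eq_mul]
        have := D.BB_omega0_pos hγ
        nlinarith
      exact absurd (hmin β' hβ'S) (not_le.mpr hlt)
  rcases D.roots_pos_or_neg β hβ with h | h
  · exact hpos β h
  · have hnegr : -β ∈ D.roots := D.posRoots_subset h
    have : D.s β = D.s (-β) := by
      refine D.s_eq_of_smul hnegr hβ (r := -1) (by norm_num) ?_
      simp
    rw [this]
    exact hpos _ h

lemma closure_simples_eq_top :
    Subgroup.closure (D.s '' (D.simples : Set D.V)) = ⊤ := by
  rw [← top_le_iff, ← D.gen_by_refl]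
  apply (Subgroup.closure_le _).mpr
  rintro x ⟨β, hβ, rfl⟩
  exact D.s_mem_closure (by simpa using hβ)

lemma t_mem (S : Subalgebra ℂ D.H) (hS : ∀ α ∈ D.simples, D.t (D.s α) ∈ S) (w : D.W) :
    D.t w ∈ S := by
  have hw : w ∈ Subgroup.closure (D.s '' (D.simples : Set D.V)) := by
    rw [D.closure_simples_eq_top]; trivial
  have := Subgroup.closure_induction
    (p := fun x _ => D.t x ∈ S ∧ D.t x⁻¹ ∈ S) ?_ ?_ ?_ ?_ hw
  · exact this.1
  · rintro x ⟨γ, hγ, rfl⟩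
    have hγs : γ ∈ D.simples := by simpa using hγ
    constructor
    · exact hS γ hγs
    · rw [D.s_inv (D.simple_root hγs)]
      exact hS γ hγs
  · constructor <;> simp [D.t_one, Subalgebra.one_mem]
  · intro x y hx hy hxt hyt
    constructor
    · rw [← D.t_mul]; exact mul_mem hxt.1 hyt.1
    · rw [mul_inv_rev, ← D.t_mul]; exact mul_mem hyt.2 hxt.2
  · intro x hx hxt
    exact ⟨hxt.2, by rw [inv_inv]; exact hxt.1⟩

end GHA

namespace GHA

open Finset

/-- Determinant of a reflection is -1. -/
private lemma det_reflection {V : Type} [AddCommGroup V] [Module ℝ V] [FiniteDimensional ℝ V]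
    (p : V →ₗ[ℝ] ℝ) (α : V) (hpα : p α = 2) :
    LinearMap.det (LinearMap.id - p.smulRight α) = -1 := by
  classical
  set b := Module.finBasis ℝ V with hb
  rw [← LinearMap.det_toMatrix b]
  have hmat : LinearMap.toMatrix b b (LinearMap.id - p.smulRight α) =
      1 + Matrix.replicateCol Unit (fun i => - b.repr α i) * Matrix.replicateRow Unit (fun j => p (b j)) := by
    ext i j
    rw [LinearMap.toMatrix_apply]
    simp only [LinearMap.sub_apply, LinearMap.id_apply, LinearMap.smulRight_apply,
      map_sub, map_smul, Finsupp.sub_apply, Finsupp.smul_apply, smul_eq_mul,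
      Matrix.add_apply, Matrix.mul_apply, Matrix.replicateCol_apply, Matrix.replicateRow_apply,
      Finset.univ_unique, Finset.sum_singleton]
    rw [Module.Basis.repr_self, Finsupp.single_apply]
    by_cases h : j = i
    · subst h; rw [Matrix.one_apply_eq]; norm_num; ring
    · rw [Matrix.one_apply_ne (Ne.symm h)]
      simp [h]
      ring
  rw [hmat, Matrix.det_one_add_replicateCol_mul_replicateRow]
  have hrepr : p α = ∑ j, b.repr α j * p (b j) := by
    conv_lhs => rw [← Module.Basis.sum_repr b α]
    rw [map_sum]
    exact Finset.sum_congr rfl fun j _ => by rw [map_smul, smul_eq_mul]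
  have hdot : dotProduct (fun j => p (b j)) (fun i => - b.repr α i) = - p α := by
    simp only [dotProduct]
    rw [hrepr, ← Finset.sum_neg_distrib]
    exact Finset.sum_congr rfl fun j _ => by ring
  rw [hdot, hpα]
  norm_num

variable (D : GHA)

/-- The sign character of W. -/
def epsR (w : D.W) : ℝ := LinearMap.det (D.actV w).toLinearMap

lemma epsR_one : D.epsR 1 = 1 := by
  rw [epsR, map_one, LinearEquiv.coe_toLinearMap_one, LinearMap.det_id]

lemma epsR_mul (u v : D.W) : D.epsR (u * v) = D.epsR u * D.epsR v := by
  rw [epsR, epsR, epsR, map_mul, LinearEquiv.coe_toLinearMap_mul, map_mul]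

lemma epsR_s {α : D.V} (hα : α ∈ D.roots) : D.epsR (D.s α) = -1 := by
  have : (D.actV (D.s α)).toLinearMap =
      LinearMap.id - (D.pairR.flip (D.cv α)).smulRight α := by
    apply LinearMap.ext
    intro v
    simp only [LinearEquiv.coe_coe, LinearMap.sub_apply, LinearMap.id_apply,
      LinearMap.smulRight_apply, LinearMap.flip_apply]
    exact D.actV_s α hα v
  rw [epsR, this]
  exact det_reflection _ _ (D.pair_cv_self α hα)

lemma epsR_sq (w : D.W) : D.epsR w * D.epsR w = 1 := by
  have hw : w ∈ Subgroup.closure (D.s '' (D.roots : Set D.V)) := by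
    rw [D.gen_by_refl]; trivial
  have hpm : D.epsR w = 1 ∨ D.epsR w = -1 := by
    refine Subgroup.closure_induction (p := fun x _ => D.epsR x = 1 ∨ D.epsR x = -1)
      ?_ ?_ ?_ ?_ hw
    · rintro x ⟨β, hβ, rfl⟩
      exact Or.inr (D.epsR_s (by simpa using hβ))
    · exact Or.inl D.epsR_one
    · intro x y _ _ hx hy
      rw [D.epsR_mul]
      rcases hx with h | h <;> rcases hy with h' | h' <;> rw [h, h'] <;> norm_num
    · intro x _ hx
      have h1 : D.epsR x * D.epsR x⁻¹ = 1 := by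
        rw [← D.epsR_mul, mul_inv_cancel, D.epsR_one]
      rcases hx with h | h
      · left; rw [h] at h1; linarith
      · right; rw [h] at h1; linarith
  rcases hpm with h | h <;> rw [h] <;> norm_num

/-- The sign character, with complex values. -/
def epsC (w : D.W) : ℂ := ((D.epsR w : ℝ) : ℂ)

lemma epsC_one : D.epsC 1 = 1 := by rw [epsC, D.epsR_one]; norm_num

lemma epsC_mul (u v : D.W) : D.epsC (u * v) = D.epsC u * D.epsC v := by
  rw [epsC, D.epsR_mul]; push_cast; rfl

lemma epsC_s {α : D.V} (hα : α ∈ D.roots) : D.epsC (D.s α) = -1 := by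
  rw [epsC, D.epsR_s hα]; norm_num

lemma epsC_sq (w : D.W) : D.epsC w * D.epsC w = 1 := by
  rw [epsC, ← Complex.ofReal_mul, D.epsR_sq w]; norm_num

/-- The polynomial subalgebra A = S(V_ℂ) of H. -/
def AA : Subalgebra ℂ D.H := Algebra.adjoin ℂ (Set.range D.θ)

/-- θ(x) as an element of A. -/
def θA (x : D.VC) : D.AA := ⟨D.θ x, Algebra.subset_adjoin ⟨x, rfl⟩⟩

lemma θA_coe (x : D.VC) : ((D.θA x : D.AA) : D.H) = D.θ x := rfl

def commAA : CommRing D.AA :=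
  Algebra.adjoinCommRingOfComm ℂ (by
    rintro a ⟨x, rfl⟩ b ⟨y, rfl⟩
    exact D.θ_comm x y)

lemma exists_alghom (f : D.VC → D.AA) (hadd : ∀ x y, f (x + y) = f x + f y)
    (hsmul : ∀ (c : ℂ) x, f (c • x) = c • f x) :
    ∃! g : D.AA →ₐ[ℂ] D.AA, ∀ x : D.VC, g (D.θA x) = f x := by
  letI : CommRing D.AA := D.commAA
  exact @GHA.poly_univ D D.AA D.commAA (Subalgebra.algebra D.AA) f hadd hsmul

end GHA

namespace GHA

open Finset

variable (D : GHA)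

lemma θA_add (x y : D.VC) : D.θA (x + y) = D.θA x + D.θA y := by
  apply Subtype.ext
  exact D.θ_add x y

lemma θA_smul (c : ℂ) (x : D.VC) : D.θA (c • x) = c • D.θA x := by
  apply Subtype.ext
  exact D.θ_smul c x

/-- The automorphism σ of A with σ(θ(x)) = -θ(x). -/
def sigmaA : D.AA →ₐ[ℂ] D.AA :=
  (D.exists_alghom (fun x => -(D.θA x))
    (fun x y => by rw [D.θA_add]; abel)
    (fun c x => by rw [D.θA_smul, smul_neg])).choose

lemma sigmaA_θ (x : D.VC) : D.sigmaA (D.θA x) = -(D.θA x) :=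
  (D.exists_alghom (fun x => -(D.θA x))
    (fun x y => by rw [D.θA_add]; abel)
    (fun c x => by rw [D.θA_smul, smul_neg])).choose_spec.1 x

lemma sigmaA_unique (g : D.AA →ₐ[ℂ] D.AA) (hg : ∀ x, g (D.θA x) = -(D.θA x)) :
    g = D.sigmaA :=
  (D.exists_alghom (fun x => -(D.θA x))
    (fun x y => by rw [D.θA_add]; abel)
    (fun c x => by rw [D.θA_smul, smul_neg])).choose_spec.2 g hg

lemma sigmaA_sigmaA (a : D.AA) : D.sigmaA (D.sigmaA a) = a := by
  have h := D.exists_alghom (fun x => D.θA x)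
    (fun x y => D.θA_add x y) (fun c x => D.θA_smul c x)
  have h1 : D.sigmaA.comp D.sigmaA = AlgHom.id ℂ D.AA := by
    have e1 : ∀ x, (D.sigmaA.comp D.sigmaA) (D.θA x) = D.θA x := by
      intro x
      rw [AlgHom.comp_apply, D.sigmaA_θ, map_neg, D.sigmaA_θ, neg_neg]
    have e2 : ∀ x, (AlgHom.id ℂ D.AA) (D.θA x) = D.θA x := fun x => rfl
    rw [h.unique e1 e2]
  calc D.sigmaA (D.sigmaA a) = (D.sigmaA.comp D.sigmaA) a := rfl
    _ = a := by rw [h1]; rfl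

/-- PBW coefficients. -/
def coef (h : D.H) : D.W → D.AA := (D.pbw_span h).choose

lemma coef_spec (h : D.H) : h = ∑ w : D.W, D.t w * ((D.coef h w : D.AA) : D.H) :=
  (D.pbw_span h).choose_spec

lemma coef_eq {h : D.H} {c : D.W → D.AA} (hc : h = ∑ w : D.W, D.t w * ((c w : D.AA) : D.H)) :
    c = D.coef h := by
  have hz : ∑ w : D.W, D.t w * (((c - D.coef h) w : D.AA) : D.H) = 0 := by
    have : ∀ w : D.W, D.t w * (((c - D.coef h) w : D.AA) : D.H) =
        D.t w * ((c w : D.AA) : D.H) - D.t w * ((D.coef h w : D.AA) : D.H) := by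
      intro w
      rw [Pi.sub_apply, AddSubgroupClass.coe_sub, mul_sub]
    rw [Finset.sum_congr rfl (fun w _ => this w), Finset.sum_sub_distrib, ← hc,
      ← D.coef_spec h, sub_self]
  funext w
  have := D.pbw_indep _ hz w
  rw [Pi.sub_apply] at this
  exact sub_eq_zero.mp this

lemma coef_add (h h' : D.H) : D.coef (h + h') = D.coef h + D.coef h' := by
  symm
  apply D.coef_eq
  have : ∀ w : D.W, D.t w * (((D.coef h + D.coef h') w : D.AA) : D.H) =
      D.t w * ((D.coef h w : D.AA) : D.H) + D.t w * ((D.coef h' w : D.AA) : D.H) := by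
    intro w
    rw [Pi.add_apply, AddMemClass.coe_add, mul_add]
  rw [Finset.sum_congr rfl (fun w _ => this w), Finset.sum_add_distrib]
  rw [← D.coef_spec h, ← D.coef_spec h']

lemma coef_smul (r : ℂ) (h : D.H) : D.coef (r • h) = r • D.coef h := by
  symm
  apply D.coef_eq
  have : ∀ w : D.W, D.t w * (((r • D.coef h) w : D.AA) : D.H) =
      r • (D.t w * ((D.coef h w : D.AA) : D.H)) := by
    intro w
    rw [Pi.smul_apply, SetLike.val_smul, mul_smul_comm]
  rw [Finset.sum_congr rfl (fun w _ => this w), ← Finset.smul_sum, ← D.coef_spec h]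

lemma coef_mono (w : D.W) (a : D.AA) : D.coef (D.t w * a) = Pi.single w a := by
  symm
  apply D.coef_eq
  rw [Finset.sum_eq_single w]
  · rw [Pi.single_eq_same]
  · intro u _ hu
    rw [Pi.single_eq_of_ne hu, ZeroMemClass.coe_zero, mul_zero]
  · intro hw
    exact absurd (Finset.mem_univ w) hw

/-- The Iwahori-Matsumoto involution as a linear map. -/
def Tl : D.H →ₗ[ℂ] D.H where
  toFun h := ∑ w : D.W, D.epsC w • (D.t w * ((D.sigmaA (D.coef h w) : D.AA) : D.H))
  map_add' h h' := by
    rw [D.coef_add, ← Finset.sum_add_distrib]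
    refine Finset.sum_congr rfl fun w _ => ?_
    rw [Pi.add_apply, map_add, AddMemClass.coe_add, mul_add, smul_add]
  map_smul' r h := by
    rw [D.coef_smul, RingHom.id_apply, Finset.smul_sum]
    refine Finset.sum_congr rfl fun w _ => ?_
    rw [Pi.smul_apply, map_smul, SetLike.val_smul, mul_smul_comm, smul_comm]

lemma Tl_mono (w : D.W) (a : D.AA) :
    D.Tl (D.t w * a) = D.epsC w • (D.t w * ((D.sigmaA a : D.AA) : D.H)) := by
  show ∑ u : D.W, D.epsC u • (D.t u * ((D.sigmaA (D.coef (D.t w * a) u) : D.AA) : D.H)) = _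
  rw [D.coef_mono]
  rw [Finset.sum_eq_single w]
  · rw [Pi.single_eq_same]
  · intro u _ hu
    rw [Pi.single_eq_of_ne hu, map_zero, ZeroMemClass.coe_zero, mul_zero, smul_zero]
  · intro hw
    exact absurd (Finset.mem_univ w) hw

lemma Tl_tw (w : D.W) : D.Tl (D.t w) = D.epsC w • D.t w := by
  have h1 : D.t w = D.t w * ((1 : D.AA) : D.H) := by rw [OneMemClass.coe_one, mul_one]
  rw [h1, D.Tl_mono, map_one, OneMemClass.coe_one, mul_one]

lemma Tl_one : D.Tl 1 = 1 := by
  rw [← D.t_one, D.Tl_tw, D.epsC_one, one_smul]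

lemma Tl_theta (x : D.VC) : D.Tl (D.θ x) = -(D.θ x) := by
  have h1 : D.θ x = D.t 1 * ((D.θA x : D.AA) : D.H) := by rw [D.t_one, one_mul]; rfl
  rw [h1, D.Tl_mono, D.sigmaA_θ, D.epsC_one, one_smul, Subalgebra.coe_neg,
    θA_coe, mul_neg, D.t_one, one_mul]

lemma Tl_ts {α : D.V} (hα : α ∈ D.roots) : D.Tl (D.t (D.s α)) = -(D.t (D.s α)) := by
  rw [D.Tl_tw, D.epsC_s hα, neg_smul, one_smul]

/-- Extensionality via PBW monomials. -/
lemma Hext (E₁ E₂ : D.H →ₗ[ℂ] D.H)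
    (hE : ∀ (w : D.W) (a : D.AA), E₁ (D.t w * a) = E₂ (D.t w * a)) (h : D.H) :
    E₁ h = E₂ h := by
  obtain ⟨c, hc⟩ := D.pbw_span h
  rw [hc, map_sum, map_sum]
  exact Finset.sum_congr rfl fun w _ => hE w (c w)

end GHA

namespace GHA

open Finset

variable (D : GHA)

lemma Tl_mul_theta (x : D.VC) (h : D.H) : D.Tl (h * D.θ x) = -(D.Tl h * D.θ x) := by
  have key := D.Hext (D.Tl ∘ₗ LinearMap.mulRight ℂ (D.θ x))
      (-(LinearMap.mulRight ℂ (D.θ x) ∘ₗ D.Tl)) (fun w a => by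
    simp only [LinearMap.comp_apply, LinearMap.mulRight_apply, LinearMap.neg_apply]
    have h1 : D.t w * ↑a * D.θ x = D.t w * ((a * D.θA x : D.AA) : D.H) := by
      rw [MulMemClass.coe_mul, θA_coe, mul_assoc]
    rw [h1, D.Tl_mono, D.Tl_mono, map_mul, D.sigmaA_θ]
    simp only [MulMemClass.coe_mul, Subalgebra.coe_neg, θA_coe, mul_neg, smul_neg,
      mul_assoc, smul_mul_assoc]) h
  simpa only [LinearMap.comp_apply, LinearMap.mulRight_apply, LinearMap.neg_apply] using key

lemma Tl_mul_ts {α : D.V} (hα : α ∈ D.simples) (h : D.H) :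
    D.Tl (h * D.t (D.s α)) = -(D.Tl h * D.t (D.s α)) := by
  have hαr := D.simple_root hα
  have hSt1 : ∀ w : D.W,
      D.Tl (D.t w * (1:D.H) * D.t (D.s α)) = -(D.Tl (D.t w * (1:D.H)) * D.t (D.s α)) := by
    intro w
    rw [mul_one, D.t_mul, D.Tl_tw, D.Tl_tw, D.epsC_mul, D.epsC_s hαr, smul_mul_assoc,
      D.t_mul, mul_neg_one, neg_smul]
  have hmain : ∀ y ∈ Algebra.adjoin ℂ (Set.range D.θ), ∀ b : D.H,
      (∀ w : D.W, D.Tl (D.t w * b * D.t (D.s α)) = -(D.Tl (D.t w * b) * D.t (D.s α))) →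
      (∀ w : D.W, D.Tl (D.t w * (b * y) * D.t (D.s α))
        = -(D.Tl (D.t w * (b * y)) * D.t (D.s α))) := by
    intro y hy
    induction hy using Algebra.adjoin_induction with
    | mem z hz =>
      obtain ⟨x, rfl⟩ := hz
      intro b hb w
      have hcr := D.cross_rel α hα x
      set cc := (D.kpar α : ℂ) * D.pairC x (D.iVd (D.cv α)) with hcc
      have hcomm : ∀ g : D.H, g * algebraMap ℂ D.H cc = cc • g := fun g => by
        rw [← Algebra.commutes cc g, ← Algebra.smul_def]
      have e1 : D.t w * (b * D.θ x) * D.t (D.s α)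
          = (D.t w * b * D.t (D.s α)) * D.θ (D.actVC (D.s α) x) + cc • (D.t w * b) := by
        rw [← mul_assoc, mul_assoc (D.t w * b) (D.θ x) (D.t (D.s α)), hcr, mul_add, hcomm,
          ← mul_assoc]
      have e3 : D.Tl (D.t w * (b * D.θ x)) = -(D.Tl (D.t w * b) * D.θ x) := by
        rw [← mul_assoc]
        exact D.Tl_mul_theta x (D.t w * b)
      rw [e1, map_add, map_smul, D.Tl_mul_theta, hb w, neg_mul, neg_neg, e3, neg_mul, neg_neg]
      conv_rhs => rw [mul_assoc, hcr, mul_add, hcomm]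
      rw [mul_assoc]
    | algebraMap r =>
      intro b hb w
      have hba : b * algebraMap ℂ D.H r = r • b := by
        rw [← Algebra.commutes r b, ← Algebra.smul_def]
      have g1 : D.t w * (r • b) * D.t (D.s α) = r • (D.t w * b * D.t (D.s α)) := by
        rw [mul_smul_comm, smul_mul_assoc]
      have g2 : D.t w * (r • b) = r • (D.t w * b) := mul_smul_comm r (D.t w) b
      rw [hba, g1, g2, map_smul, map_smul, hb w, smul_neg, smul_mul_assoc]
    | add y z hy hz ihy ihz =>
      intro b hb w
      simp only [mul_add, add_mul, map_add]
      rw [ihy b hb w, ihz b hb w]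
      abel
    | mul y z hy hz ihy ihz =>
      intro b hb w
      have h3 := ihz (b * y) (ihy b hb) w
      rw [← mul_assoc b y z]
      exact h3
  have hSta : ∀ a : D.AA, ∀ w : D.W,
      D.Tl (D.t w * ↑a * D.t (D.s α)) = -(D.Tl (D.t w * ↑a) * D.t (D.s α)) := by
    intro a w
    have := hmain ↑a a.2 1 hSt1 w
    rw [one_mul] at this
    exact this
  have key := D.Hext (D.Tl ∘ₗ LinearMap.mulRight ℂ (D.t (D.s α)))
      (-(LinearMap.mulRight ℂ (D.t (D.s α)) ∘ₗ D.Tl)) (fun w a => by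
    simp only [LinearMap.comp_apply, LinearMap.mulRight_apply, LinearMap.neg_apply]
    exact hSta a w) h
  simpa only [LinearMap.comp_apply, LinearMap.mulRight_apply, LinearMap.neg_apply] using key

/-- The subalgebra of elements g with T(hg) = T(h)T(g) for all h. -/
def Gset : Subalgebra ℂ D.H where
  carrier := {g | ∀ h : D.H, D.Tl (h * g) = D.Tl h * D.Tl g}
  mul_mem' := by
    intro g g' hg hg' h
    rw [← mul_assoc, hg' (h * g), hg h, hg' g, ← mul_assoc]
  one_mem' := by
    intro h
    rw [mul_one, D.Tl_one, mul_one]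
  add_mem' := by
    intro g g' hg hg' h
    rw [mul_add, map_add, map_add, hg h, hg' h, mul_add]
  zero_mem' := by
    intro h
    simp
  algebraMap_mem' := by
    intro r h
    have h1 : h * algebraMap ℂ D.H r = r • h := by
      rw [← Algebra.commutes r h, ← Algebra.smul_def]
    have h2 : algebraMap ℂ D.H r = r • (1 : D.H) := Algebra.algebraMap_eq_smul_one r
    rw [h1, map_smul, h2, map_smul, D.Tl_one, mul_smul_comm, mul_one]

lemma Tl_mul (g h : D.H) : D.Tl (h * g) = D.Tl h * D.Tl g := by
  have hg : ∀ g' : D.H, g' ∈ D.Gset := by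
    intro g'
    obtain ⟨c, hc⟩ := D.pbw_span g'
    rw [hc]
    apply Subalgebra.sum_mem
    intro w _
    refine mul_mem ?_ ?_
    · refine D.t_mem D.Gset (fun β hβ => ?_) w
      intro h'
      rw [D.Tl_mul_ts hβ, D.Tl_ts (D.simple_root hβ), mul_neg]
    · have hle : D.AA ≤ D.Gset := by
        apply Algebra.adjoin_le
        rintro _ ⟨x, rfl⟩
        intro h'
        rw [D.Tl_mul_theta, D.Tl_theta, mul_neg]
      exact hle (c w).2
  exact hg g h

/-- The Iwahori-Matsumoto involution. -/
def tau : D.H →ₐ[ℂ] D.H :=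
  AlgHom.ofLinearMap D.Tl D.Tl_one (fun x y => D.Tl_mul y x)

lemma tau_apply (h : D.H) : D.tau h = D.Tl h := rfl

lemma tau_invol : Function.Involutive D.tau := by
  intro h
  show D.Tl (D.Tl h) = h
  obtain ⟨c, hc⟩ := D.pbw_span h
  rw [hc, map_sum, map_sum]
  refine Finset.sum_congr rfl fun w _ => ?_
  rw [D.Tl_mono w (c w), map_smul, D.Tl_mono, D.sigmaA_sigmaA (c w), smul_smul, D.epsC_sq, one_smul]

lemma tau_ts {α : D.V} (hα : α ∈ D.simples) : D.tau (D.t (D.s α)) = -(D.t (D.s α)) :=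
  D.Tl_ts (D.simple_root hα)

lemma tau_theta (x : D.VC) : D.tau (D.θ x) = -(D.θ x) := D.Tl_theta x

lemma tau_unique (τ' : D.H →ₐ[ℂ] D.H)
    (h1 : ∀ α ∈ D.simples, τ' (D.t (D.s α)) = -(D.t (D.s α)))
    (h2 : ∀ x : D.VC, τ' (D.θ x) = -(D.θ x)) : τ' = D.tau := by
  have hEq : ∀ h : D.H, h ∈ AlgHom.equalizer τ' D.tau := by
    intro h
    obtain ⟨c, hc⟩ := D.pbw_span h
    rw [hc]
    apply Subalgebra.sum_mem
    intro w _
    refine mul_mem ?_ ?_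
    · refine D.t_mem _ (fun β hβ => ?_) w
      show τ' (D.t (D.s β)) = D.tau (D.t (D.s β))
      rw [h1 β hβ, D.tau_ts hβ]
    · have hle : D.AA ≤ AlgHom.equalizer τ' D.tau := by
        apply Algebra.adjoin_le
        rintro _ ⟨x, rfl⟩
        show τ' (D.θ x) = D.tau (D.θ x)
        rw [h2 x, D.tau_theta x]
      exact hle (c w).2
  exact AlgHom.ext fun h => hEq h

end GHA

namespace GHA

open Finset

lemma pow_neg_apply_zero_iff {X : Type} [AddCommGroup X] [Module ℂ X]
    (S : Module.End ℂ X) (n : ℕ) (x : X) : ((-S)^n) x = 0 ↔ (S^n) x = 0 := by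
  have h : (-S)^n = (-1 : Module.End ℂ X)^n * S^n := by
    rw [← neg_one_mul S, (Commute.neg_one_left S).mul_pow]
  have hsq : ((-1 : Module.End ℂ X)^n) * ((-1 : Module.End ℂ X)^n) = 1 := by
    rw [← (Commute.refl (-1 : Module.End ℂ X)).mul_pow, neg_one_mul, neg_neg, one_pow]
  rw [h, Module.End.mul_apply]
  constructor
  · intro h0
    have h1 := congrArg (fun y => ((-1 : Module.End ℂ X)^n) y) h0
    simp only [map_zero] at h1
    rw [← Module.End.mul_apply, hsq, Module.End.one_apply] at h1
    exact h1
  · intro h0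
    rw [h0, map_zero]

variable (D : GHA)

lemma wtH_comp {X : Type} [AddCommGroup X] [Module ℂ X]
    (π : D.H →ₐ[ℂ] Module.End ℂ X) (τ : D.H →ₐ[ℂ] D.H)
    (hτ : ∀ ω : D.VC, τ (D.θ ω) = -(D.θ ω)) (mu : D.VdC) :
    D.wtH (π.comp τ) mu = D.wtH π (-mu) := by
  have hop : ∀ ω : D.VC, (π.comp τ) (D.θ ω) - D.pairC ω mu • (1 : Module.End ℂ X)
      = -(π (D.θ ω) - D.pairC ω (-mu) • (1 : Module.End ℂ X)) := by
    intro ω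
    rw [AlgHom.comp_apply, hτ, map_neg]
    have hpc : D.pairC ω (-mu) = - D.pairC ω mu := by
      rw [show -mu = ((-1 : ℂ) • mu) from (neg_one_smul ℂ mu).symm, D.pairC_smul_right]
      ring
    rw [hpc]
    module
  ext x
  constructor
  · intro hx ω
    obtain ⟨n, hn⟩ := hx ω
    rw [hop ω] at hn
    exact ⟨n, (pow_neg_apply_zero_iff _ n x).mp hn⟩
  · intro hx ω
    obtain ⟨n, hn⟩ := hx ω
    refine ⟨n, ?_⟩
    rw [hop ω]
    exact (pow_neg_apply_zero_iff _ n x).mpr hn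

lemma omegaH_neg {X : Type} [AddCommGroup X] [Module ℂ X]
    (π : D.H →ₐ[ℂ] Module.End ℂ X) (τ : D.H →ₐ[ℂ] D.H)
    (hτ : ∀ ω : D.VC, τ (D.θ ω) = -(D.θ ω)) {lam : D.VdC} (hlam : lam ∈ D.OmegaH π) :
    -lam ∈ D.OmegaH (π.comp τ) := by
  have : D.wtH (π.comp τ) (-lam) = D.wtH π lam := by
    rw [D.wtH_comp π τ hτ, neg_neg]
  show D.wtH (π.comp τ) (-lam) ≠ ⊥
  rw [this]
  exact hlam

end GHA

open GHA in
/-- the Iwahori–Matsumoto involution exists and is unique; if X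
and its IM-twist are both tempered then the weights of X are purely
imaginary. -/
theorem stmt_6 (D : GHA) (hspan : Submodule.span ℝ (D.roots : Set D.V) = ⊤) :
    (∃! τ : D.H →ₐ[ℂ] D.H, Function.Bijective τ ∧
      (∀ α ∈ D.simples, τ (D.t (D.s α)) = -(D.t (D.s α))) ∧
      (∀ ω : D.VC, τ (D.θ ω) = -(D.θ ω))) ∧
    (∀ τ : D.H →ₐ[ℂ] D.H, Function.Bijective τ →
      (∀ α ∈ D.simples, τ (D.t (D.s α)) = -(D.t (D.s α))) →
      (∀ ω : D.VC, τ (D.θ ω) = -(D.θ ω)) →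
      ∀ {X : Type} [AddCommGroup X] [Module ℂ X] [FiniteDimensional ℂ X],
      ∀ (π : D.H →ₐ[ℂ] Module.End ℂ X), GHA.IsIrrRep D.H π →
        D.IsTempered π → D.IsTempered (π.comp τ) →
        ∀ lam ∈ D.OmegaH π, D.reVd lam = 0) := by
  constructor
  · refine ⟨D.tau, ⟨D.tau_invol.bijective, fun α hα => D.tau_ts hα, fun x => D.tau_theta x⟩,
      fun τ' hτ' => D.tau_unique τ' hτ'.2.1 hτ'.2.2⟩
  · intro τ hbij hts hθ X _ _ _ π hirr htemp htemp' lam hlam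
    apply D.pair_nondeg_right
    have hdom : ∀ ω : D.V, (∀ α ∈ D.simples, 0 < D.pairR ω (D.cv α)) →
        D.pairR ω (D.reVd lam) = 0 := by
      intro ω hω
      have h1 := htemp lam hlam ω hω
      have h2 := htemp' (-lam) (D.omegaH_neg π τ hθ hlam) ω hω
      rw [map_neg, map_neg] at h2
      linarith
    intro v
    have h0 : D.pairR D.omega0 (D.reVd lam) = 0 :=
      hdom D.omega0 (fun α hα => D.omega0_dominant hα)
    -- choose a small ε > 0
    set Eset : Finset ℝ := insert (1:ℝ)
      (D.simples.image (fun α => D.pairR D.omega0 (D.cv α) / (|D.pairR v (D.cv α)| + 1)))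
      with hEset
    have hEne : Eset.Nonempty := ⟨1, Finset.mem_insert_self _ _⟩
    set ε := Eset.min' hEne with hε
    have hεpos : 0 < ε := by
      rw [hε]
      rw [Finset.lt_min'_iff]
      intro y hy
      rcases Finset.mem_insert.mp hy with h | h
      · rw [h]; norm_num
      · obtain ⟨α, hα, rfl⟩ := Finset.mem_image.mp h
        apply div_pos (D.omega0_dominant hα)
        positivity
    have hdom2 : ∀ α ∈ D.simples, 0 < D.pairR (D.omega0 + ε • v) (D.cv α) := by
      intro α hα
      rw [map_add, map_smul, LinearMap.add_apply, LinearMap.smul_apply, smul_eq_mul]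
      set q := D.pairR D.omega0 (D.cv α)
      set r := D.pairR v (D.cv α)
      have hq : 0 < q := D.omega0_dominant hα
      have hεle : ε ≤ q / (|r| + 1) := by
        apply Finset.min'_le
        exact Finset.mem_insert_of_mem (Finset.mem_image.mpr ⟨α, hα, rfl⟩)
      have habs : 0 ≤ |r| := abs_nonneg r
      have h1 : ε * |r| ≤ (q / (|r| + 1)) * |r| :=
        mul_le_mul_of_nonneg_right hεle habs
      have h2 : (q / (|r| + 1)) * |r| < q := by
        rw [div_mul_eq_mul_div, div_lt_iff₀ (by linarith)]
        nlinarith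
      have h3 : -(ε * |r|) ≤ ε * r := by
        have := mul_le_mul_of_nonneg_left (neg_abs_le r) (le_of_lt hεpos)
        linarith [this]
      linarith
    have hz := hdom (D.omega0 + ε • v) hdom2
    rw [map_add, map_smul, LinearMap.add_apply, LinearMap.smul_apply, smul_eq_mul, h0,
      zero_add] at hz
    rcases mul_eq_zero.mp hz with h | h
    · exact absurd h (ne_of_gt hεpos)
    · exact h
end
end

section
/- Let Π_M⊆Π and let (σ,U) be a finite-dimensional H_M-module. Suppose there exists ν∈V∨_ℂ with (α,ν)=0 for all α∈Π_M and (α,Re ν)>0 for all α∈Π∖Π_M, such that every generalized S(V_ℂ)-weight μ of U satisfies: μ−ν lies in the ℂ-span of {α∨:α∈Π_M} and Re(μ−ν)=−Σ_{α∈Π_M} d_α·α∨ with all d_α≥0. Then for every such weight μ of U, the generalized weight space of the induced module satisfies dim X(M,σ)_μ = dim U_μ. -/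
/- Formalization of the setting of Barbasch–Ciubotaru, "Hermitian forms for
affine Hecke algebras": a reduced root system, Weyl group, parameters,
complexifications, and the graded affine Hecke algebra. -/

noncomputable section

namespace StmtAux
open GHA

variable (D : GHA)

section ActionBasics

lemma actV_mul (a b : D.W) (v : D.V) : D.actV (a * b) v = D.actV a (D.actV b v) := by
  rw [map_mul]; rfl

lemma actV_one (v : D.V) : D.actV 1 v = v := by
  rw [map_one]; rfl

lemma actVd_mul (a b : D.W) (u : D.Vd) : D.actVd (a * b) u = D.actVd a (D.actVd b u) := by
  rw [map_mul]; rfl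

lemma actVd_one (u : D.Vd) : D.actVd 1 u = u := by
  rw [map_one]; rfl

lemma actVC_mul (a b : D.W) (v : D.VC) : D.actVC (a * b) v = D.actVC a (D.actVC b v) := by
  rw [map_mul]; rfl

lemma actVC_one (v : D.VC) : D.actVC 1 v = v := by
  rw [map_one]; rfl

lemma actVdC_mul (a b : D.W) (u : D.VdC) : D.actVdC (a * b) u = D.actVdC a (D.actVdC b u) := by
  rw [map_mul]; rfl

lemma actVdC_one (u : D.VdC) : D.actVdC 1 u = u := by
  rw [map_one]; rfl

lemma actV_inv_apply (a : D.W) (v : D.V) : D.actV a (D.actV a⁻¹ v) = v := by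
  rw [← actV_mul, mul_inv_cancel, actV_one]

lemma actVC_inv_apply (a : D.W) (v : D.VC) : D.actVC a (D.actVC a⁻¹ v) = v := by
  rw [← actVC_mul, mul_inv_cancel, actVC_one]

lemma actVC_inv_apply' (a : D.W) (v : D.VC) : D.actVC a⁻¹ (D.actVC a v) = v := by
  rw [← actVC_mul, inv_mul_cancel, actVC_one]

/-- `⟨w v, u⟩ = ⟨v, w⁻¹ u⟩`. -/
lemma pair_act_left (w : D.W) (v : D.V) (u : D.Vd) :
    D.pairR (D.actV w v) u = D.pairR v (D.actVd w⁻¹ u) := by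
  have := D.act_pair w⁻¹ (D.actV w v) u
  rw [← actV_mul, inv_mul_cancel, actV_one] at this
  exact this.symm

/-- `⟨v, w u⟩ = ⟨w⁻¹ v, u⟩`. -/
lemma pair_act_right (w : D.W) (v : D.V) (u : D.Vd) :
    D.pairR v (D.actVd w u) = D.pairR (D.actV w⁻¹ v) u := by
  have := D.act_pair w (D.actV w⁻¹ v) u
  rw [actV_inv_apply] at this
  exact this

lemma roots_neg_mem {α : D.V} (hα : α ∈ D.roots) : -α ∈ D.roots := by
  have h := D.actV_roots (D.s α) α hα
  rw [D.actV_s α hα, D.pair_cv_self α hα] at h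
  have : α - (2 : ℝ) • α = -α := by module
  rwa [this] at h

lemma s_sq {α : D.V} (hα : α ∈ D.roots) : D.s α * D.s α = 1 := by
  apply D.actV_faithful
  intro v
  rw [actV_mul, D.actV_s α hα v, D.actV_s α hα]
  rw [map_sub, map_smul, LinearMap.sub_apply, LinearMap.smul_apply, D.pair_cv_self α hα]
  set c := D.pairR v (D.cv α)
  have : c - c • (2:ℝ) = -c := by ring_nf
  rw [this]
  module

lemma s_inv {α : D.V} (hα : α ∈ D.roots) : (D.s α)⁻¹ = D.s α :=
  inv_eq_of_mul_eq_one_right (s_sq D hα)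

lemma actV_s_self {α : D.V} (hα : α ∈ D.roots) : D.actV (D.s α) α = -α := by
  rw [D.actV_s α hα, D.pair_cv_self α hα]
  module

lemma actVd_s_cv {α : D.V} (hα : α ∈ D.roots) : D.actVd (D.s α) (D.cv α) = -(D.cv α) := by
  rw [D.actVd_s α hα, D.pair_cv_self α hα]
  module

lemma cv_ne_zero {α : D.V} (hα : α ∈ D.roots) : D.cv α ≠ 0 := by
  intro h
  have := D.pair_cv_self α hα
  rw [h] at this
  simp at this

end ActionBasics

end StmtAux
namespace StmtAux
open GHA

variable (D : GHA)

section DualVec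

/-- Every linear functional on `V` is represented by an element of `V∨`. -/
lemma exists_dual_vec (f : D.V →ₗ[ℝ] ℝ) : ∃ e : D.Vd, ∀ v : D.V, D.pairR v e = f v := by
  let Φ : D.Vd →ₗ[ℝ] Module.Dual ℝ D.V := D.pairR.flip
  have hΦ : Function.Injective Φ := by
    intro a b hab
    have h : ∀ v : D.V, D.pairR v (a - b) = 0 := by
      intro v
      have := congrArg (fun g => g v) hab
      simp only [Φ, LinearMap.flip_apply] at this
      simp [map_sub, this]
    have := D.pair_nondeg_right _ h
    exact sub_eq_zero.mp this
  have hΨ : Function.Injective (D.pairR : D.V →ₗ[ℝ] Module.Dual ℝ D.Vd) := by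
    intro a b hab
    have h : ∀ u : D.Vd, D.pairR (a - b) u = 0 := by
      intro u
      rw [map_sub]
      rw [hab]
      simp
    have := D.pair_nondeg_left _ h
    exact sub_eq_zero.mp this
  have h1 : Module.finrank ℝ D.Vd ≤ Module.finrank ℝ (Module.Dual ℝ D.V) :=
    LinearMap.finrank_le_finrank_of_injective hΦ
  have h2 : Module.finrank ℝ D.V ≤ Module.finrank ℝ (Module.Dual ℝ D.Vd) :=
    LinearMap.finrank_le_finrank_of_injective hΨ
  rw [Subspace.dual_finrank_eq] at h1 h2
  have heq : Module.finrank ℝ D.Vd = Module.finrank ℝ (Module.Dual ℝ D.V) := by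
    rw [Subspace.dual_finrank_eq]
    omega
  have hsurj : Function.Surjective Φ :=
    (LinearMap.injective_iff_surjective_of_finrank_eq_finrank heq).mp hΦ
  obtain ⟨e, he⟩ := hsurj f
  exact ⟨e, fun v => congrArg (fun g => g v) he⟩

/-- There is `e ∈ V∨` pairing to `1` with every simple root. -/
lemma exists_e : ∃ e : D.Vd, ∀ δ ∈ D.simples, D.pairR δ e = 1 := by
  have hs : LinearIndepOn ℝ id (↑D.simples : Set D.V) :=
    D.simples_linearIndependent
  let b := Module.Basis.extend hs
  obtain ⟨e, he⟩ := exists_dual_vec D b.sumCoords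
  refine ⟨e, fun δ hδ => ?_⟩
  have hmem : δ ∈ hs.extend (Set.subset_univ _) := hs.subset_extend _ (by exact hδ)
  have : b ⟨δ, hmem⟩ = δ := Module.Basis.extend_apply_self hs ⟨δ, hmem⟩
  rw [he δ, ← this, Module.Basis.sumCoords_self_apply]

end DualVec

section Forms

/-- A `W`-invariant inner product on `V∨`. -/
structure GoodForm where
  B : D.Vd →ₗ[ℝ] D.Vd →ₗ[ℝ] ℝ
  symm : ∀ u v, B u v = B v u
  nonneg : ∀ u, 0 ≤ B u u
  definite : ∀ u, B u u = 0 → u = 0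
  inv : ∀ (w : D.W) (u v), B (D.actVd w u) (D.actVd w v) = B u v

lemma exists_goodForm : Nonempty (GoodForm D) := by
  classical
  let bV := Module.finBasis ℝ D.Vd
  let eF := bV.equivFun
  let B0 : D.Vd →ₗ[ℝ] D.Vd →ₗ[ℝ] ℝ :=
    LinearMap.mk₂ ℝ (fun u v => ∑ i, eF u i * eF v i)
      (by intro a b v; simp [map_add, add_mul, Finset.sum_add_distrib])
      (by intro c a v; simp [map_smul, Finset.mul_sum, smul_eq_mul, mul_assoc])
      (by intro a b v; simp [map_add, mul_add, Finset.sum_add_distrib])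
      (by intro c a v; simp [map_smul, Finset.mul_sum, smul_eq_mul]; ring_nf; simp [mul_comm, mul_left_comm])
  have hB0nn : ∀ u, 0 ≤ B0 u u := by
    intro u
    simp only [B0, LinearMap.mk₂_apply]
    apply Finset.sum_nonneg
    intro i _
    exact mul_self_nonneg _
  have hB0def : ∀ u, B0 u u = 0 → u = 0 := by
    intro u hu
    simp only [B0, LinearMap.mk₂_apply] at hu
    have hco : ∀ i, eF u i = 0 := by
      intro i
      have h := (Finset.sum_eq_zero_iff_of_nonneg (fun i _ => mul_self_nonneg (eF u i))).mp hu i (Finset.mem_univ i)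
      exact mul_self_eq_zero.mp h
    have h2 : eF u = 0 := funext hco
    exact eF.injective (by rw [h2]; simp)
  let B : D.Vd →ₗ[ℝ] D.Vd →ₗ[ℝ] ℝ :=
    LinearMap.mk₂ ℝ (fun u v => ∑ w : D.W, B0 (D.actVd w u) (D.actVd w v))
      (by intro a b v; simp [map_add, Finset.sum_add_distrib])
      (by intro c a v; simp [map_smul, smul_eq_mul, Finset.mul_sum])
      (by intro a b v; simp [map_add, Finset.sum_add_distrib])
      (by intro c a v; simp [map_smul, smul_eq_mul, Finset.mul_sum])
  refine ⟨⟨B, ?_, ?_, ?_, ?_⟩⟩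
  · intro u v
    simp only [B, LinearMap.mk₂_apply]
    apply Finset.sum_congr rfl
    intro w _
    simp only [B0, LinearMap.mk₂_apply]
    apply Finset.sum_congr rfl
    intro i _
    ring
  · intro u
    simp only [B, LinearMap.mk₂_apply]
    apply Finset.sum_nonneg
    intro w _
    exact hB0nn _
  · intro u hu
    simp only [B, LinearMap.mk₂_apply] at hu
    have h1 : B0 (D.actVd 1 u) (D.actVd 1 u) = 0 :=
      (Finset.sum_eq_zero_iff_of_nonneg (fun w _ => hB0nn _)).mp hu 1 (Finset.mem_univ 1)
    rw [actVd_one] at h1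
    exact hB0def u h1
  · intro w u v
    simp only [B, LinearMap.mk₂_apply]

    refine Fintype.sum_equiv (Equiv.mulRight w) _ _ ?_
    intro w'
    simp only [Equiv.coe_mulRight]
    rw [actVd_mul, actVd_mul]

variable {D}

lemma GoodForm.eq_of_pair (G : GoodForm D) {u₁ u₂ : D.Vd}
    (h : ∀ u, G.B u₁ u = G.B u₂ u) : u₁ = u₂ := by
  have h0 : ∀ u, G.B (u₁ - u₂) u = 0 := by
    intro u
    rw [map_sub, LinearMap.sub_apply, h u, sub_self]
  have := G.definite (u₁ - u₂) (h0 _)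
  exact sub_eq_zero.mp this

lemma GoodForm.pos (G : GoodForm D) {u : D.Vd} (hu : u ≠ 0) : 0 < G.B u u :=
  lt_of_le_of_ne (G.nonneg u) (fun h => hu (G.definite u h.symm))

/-- `B(α∨, u) = (B(α∨,α∨)/2) ⟨α, u⟩`. -/
lemma GoodForm.coroot (G : GoodForm D) {α : D.V} (hα : α ∈ D.roots) (u : D.Vd) :
    2 * G.B (D.cv α) u = G.B (D.cv α) (D.cv α) * D.pairR α u := by
  set c := D.pairR α u with hc
  set u' := u - (c / 2) • D.cv α with hu'
  have hpu' : D.pairR α u' = 0 := by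
    rw [hu', map_sub, map_smul, D.pair_cv_self α hα, ← hc]
    simp
    try ring
  have hfix : D.actVd (D.s α) u' = u' := by
    rw [D.actVd_s α hα, hpu']
    simp
  have h0 : G.B (D.cv α) u' = 0 := by
    have h1 := G.inv (D.s α) (D.cv α) u'
    rw [actVd_s_cv D hα, hfix, map_neg, LinearMap.neg_apply] at h1
    linarith
  have hexp : G.B (D.cv α) u = (c / 2) * G.B (D.cv α) (D.cv α) := by
    have : G.B (D.cv α) u' = G.B (D.cv α) u - (c/2) * G.B (D.cv α) (D.cv α) := by
      rw [hu', map_sub, map_smul]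
      simp [smul_eq_mul]
    rw [this] at h0
    linarith
  rw [hexp]; ring

lemma GoodForm.coroot' (G : GoodForm D) {α : D.V} (hα : α ∈ D.roots) (u : D.Vd) :
    G.B (D.cv α) u = (G.B (D.cv α) (D.cv α) / 2) * D.pairR α u := by
  have := G.coroot hα u
  linarith

variable (D)

/-- `cv` is `W`-equivariant. -/
lemma cv_equivariant (w : D.W) {α : D.V} (hα : α ∈ D.roots) :
    D.actVd w (D.cv α) = D.cv (D.actV w α) := by
  obtain ⟨G⟩ := exists_goodForm D
  have hβ : D.actV w α ∈ D.roots := D.actV_roots w α hα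
  set Na := G.B (D.cv α) (D.cv α) with hNa
  set Nb := G.B (D.cv (D.actV w α)) (D.cv (D.actV w α)) with hNb
  have h1 : ∀ u, G.B (D.actVd w (D.cv α)) u = (Na / 2) * D.pairR (D.actV w α) u := by
    intro u
    have hi := G.inv w⁻¹ (D.actVd w (D.cv α)) u
    rw [← actVd_mul, inv_mul_cancel, actVd_one] at hi
    rw [← hi, G.coroot' hα]
    congr 1
    rw [pair_act_right]
    simp
  have h2 : ∀ u, G.B (D.cv (D.actV w α)) u = (Nb / 2) * D.pairR (D.actV w α) u := by
    intro u
    rw [G.coroot' hβ]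
  have heqN : Na = Nb := by
    have p1 : D.pairR (D.actV w α) (D.actVd w (D.cv α)) = 2 := by
      rw [D.act_pair w α (D.cv α), D.pair_cv_self α hα]
    have p2 : D.pairR (D.actV w α) (D.cv (D.actV w α)) = 2 := D.pair_cv_self _ hβ
    have q1 : G.B (D.actVd w (D.cv α)) (D.actVd w (D.cv α)) = Na := G.inv w _ _
    have q2 := h1 (D.actVd w (D.cv α))
    rw [q1, p1] at q2
    have q3 := h2 (D.cv (D.actV w α))
    rw [← hNb, p2] at q3
    -- q2 : Na = Na/2 * 2, trivial; instead compare cross terms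
    have r1 := h1 (D.cv (D.actV w α))
    have r2 := h2 (D.actVd w (D.cv α))
    rw [p2] at r1
    rw [p1] at r2
    have hsym : G.B (D.actVd w (D.cv α)) (D.cv (D.actV w α)) =
        G.B (D.cv (D.actV w α)) (D.actVd w (D.cv α)) := G.symm _ _
    rw [r1, r2] at hsym
    linarith
  have hvec : ∀ u, G.B (D.actVd w (D.cv α)) u = G.B (D.cv (D.actV w α)) u := by
    intro u
    rw [h1, h2, heqN]
  exact G.eq_of_pair hvec

lemma cv_neg {α : D.V} (hα : α ∈ D.roots) : D.cv (-α) = -(D.cv α) := by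
  have h := cv_equivariant D (D.s α) hα
  rw [actV_s_self D hα] at h
  rw [← h, actVd_s_cv D hα]

end Forms

end StmtAux
namespace StmtAux
open GHA

variable (D : GHA)

section Positivity

lemma pair_sum_simples {β : D.V} (hβ : β ∈ D.posRoots) (u : D.Vd) :
    ∃ c : D.V → ℝ, (∀ δ ∈ D.simples, 0 ≤ c δ) ∧ β = ∑ δ ∈ D.simples, c δ • δ ∧
      D.pairR β u = ∑ δ ∈ D.simples, c δ * D.pairR δ u := by
  obtain ⟨c, hc0, hcsum⟩ := D.posRoots_nonneg_comb β hβ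
  refine ⟨c, hc0, hcsum, ?_⟩
  rw [hcsum, map_sum, LinearMap.sum_apply]
  apply Finset.sum_congr rfl
  intro δ _
  rw [map_smul, LinearMap.smul_apply, smul_eq_mul]

lemma pos_pair {lam : D.Vd} (hlam : ∀ δ ∈ D.simples, 0 ≤ D.pairR δ lam)
    {β : D.V} (hβ : β ∈ D.posRoots) : 0 ≤ D.pairR β lam := by
  obtain ⟨c, hc0, _, hps⟩ := pair_sum_simples D hβ lam
  rw [hps]
  exact Finset.sum_nonneg fun δ hδ => mul_nonneg (hc0 δ hδ) (hlam δ hδ)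

lemma pos_pair_e {e : D.Vd} (he : ∀ δ ∈ D.simples, D.pairR δ e = 1)
    {β : D.V} (hβ : β ∈ D.posRoots) : 0 < D.pairR β e := by
  obtain ⟨c, hc0, hcsum, hps⟩ := pair_sum_simples D hβ e
  have hnn : ∀ δ ∈ D.simples, 0 ≤ c δ * D.pairR δ e :=
    fun δ hδ => mul_nonneg (hc0 δ hδ) (by rw [he δ hδ]; norm_num)
  rcases lt_or_eq_of_le (Finset.sum_nonneg hnn) with h | h
  · rw [hps]; exact h
  · exfalso
    have hz : ∀ δ ∈ D.simples, c δ = 0 := by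
      intro δ hδ
      have := (Finset.sum_eq_zero_iff_of_nonneg hnn).mp h.symm δ hδ
      rw [he δ hδ, mul_one] at this
      exact this
    have : β = 0 := by
      rw [hcsum]
      apply Finset.sum_eq_zero
      intro δ hδ
      rw [hz δ hδ, zero_smul]
    exact D.roots_ne_zero β (D.posRoots_subset hβ) this

lemma mem_pos_of_e {e : D.Vd} (he : ∀ δ ∈ D.simples, D.pairR δ e = 1)
    {β : D.V} (hβ : β ∈ D.roots) (hpos : 0 < D.pairR β e) : β ∈ D.posRoots := by
  rcases D.roots_pos_or_neg β hβ with h | h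
  · exact h
  · exfalso
    have := pos_pair_e D he h
    rw [map_neg, LinearMap.neg_apply] at this
    linarith

lemma span_PiM_of_pair_zero (PiM : Finset D.V) {lam : D.Vd}
    (hlam1 : ∀ δ ∈ D.simples, 0 ≤ D.pairR δ lam)
    (hlam3 : ∀ δ ∈ D.simples, D.pairR δ lam = 0 → δ ∈ PiM)
    {β : D.V} (hβ : β ∈ D.posRoots) (h0 : D.pairR β lam = 0) :
    β ∈ Submodule.span ℝ (PiM : Set D.V) := by
  obtain ⟨c, hc0, hcsum, hps⟩ := pair_sum_simples D hβ lam
  have hnn : ∀ δ ∈ D.simples, 0 ≤ c δ * D.pairR δ lam :=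
    fun δ hδ => mul_nonneg (hc0 δ hδ) (hlam1 δ hδ)
  have hterm : ∀ δ ∈ D.simples, c δ * D.pairR δ lam = 0 := by
    intro δ hδ
    exact (Finset.sum_eq_zero_iff_of_nonneg hnn).mp (by rw [← hps, h0]) δ hδ
  rw [hcsum]
  apply Submodule.sum_mem
  intro δ hδ
  by_cases hc : D.pairR δ lam = 0
  · exact Submodule.smul_mem _ _ (Submodule.subset_span (by exact_mod_cast hlam3 δ hδ hc))
  · have : c δ = 0 := by
      have := hterm δ hδ
      rcases mul_eq_zero.mp this with h | h
      · exact h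
      · exact absurd h hc
    rw [this, zero_smul]
    exact Submodule.zero_mem _

lemma simple_comb_eq_zero {t : D.V → ℝ} (h : ∑ δ ∈ D.simples, t δ • δ = 0) :
    ∀ δ ∈ D.simples, t δ = 0 := by
  intro δ hδ
  have hli := linearIndependent_iff'.mp D.simples_linearIndependent
  have hconv : ∑ i ∈ (Finset.univ : Finset {x // x ∈ D.simples}), t i.val • (i.val : D.V) = 0 := by
    rw [← h, ← Finset.sum_coe_sort D.simples (fun x => t x • x)]
  exact hli Finset.univ (fun i => t i.val) hconv ⟨δ, hδ⟩ (Finset.mem_univ _)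

end Positivity

section InvSet

/-- Left inversion set. -/
def Inv (w : D.W) : Finset D.V :=
  D.posRoots.filter (fun β => -(D.actV w β) ∈ D.posRoots)

lemma eq_one_of_pos {w : D.W} (h : ∀ β ∈ D.posRoots, D.actV w β ∈ D.posRoots) :
    w = 1 := by
  have hw0 : ∀ α ∈ D.posRoots, -(D.actV (w * D.w0) α) ∈ D.posRoots := by
    intro α hα
    have h0 := D.w0_neg α hα
    rw [actV_mul]
    have : -(D.actV w (D.actV D.w0 α)) = D.actV w (-(D.actV D.w0 α)) := by
      rw [map_neg]
    rw [this]
    exact h _ h0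
  have := D.w0_unique _ hw0
  have h1 : w * D.w0 = 1 * D.w0 := by rw [this, one_mul]
  exact mul_right_cancel h1

lemma exists_simple_neg {e : D.Vd} (he : ∀ δ ∈ D.simples, D.pairR δ e = 1)
    {w : D.W} (hw : w ≠ 1) : ∃ α ∈ D.simples, -(D.actV w α) ∈ D.posRoots := by
  by_contra hcon
  push_neg at hcon
  apply hw
  apply eq_one_of_pos D
  intro β hβ
  obtain ⟨c, hc0, hcsum, _⟩ := pair_sum_simples D hβ e
  have hsimple : ∀ δ ∈ D.simples, D.actV w δ ∈ D.posRoots := by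
    intro δ hδ
    have hδr : δ ∈ D.roots := D.posRoots_subset (D.simples_subset hδ)
    rcases D.roots_pos_or_neg _ (D.actV_roots w δ hδr) with h | h
    · exact h
    · exact absurd h (hcon δ hδ)
  have hwβ : D.actV w β = ∑ δ ∈ D.simples, c δ • D.actV w δ := by
    rw [hcsum, map_sum]
    apply Finset.sum_congr rfl
    intro δ _
    rw [map_smul]
  have hpos : 0 < D.pairR (D.actV w β) e := by
    rw [hwβ, map_sum, LinearMap.sum_apply]
    have hterm : ∀ δ ∈ D.simples, 0 ≤ D.pairR (c δ • D.actV w δ) e := by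
      intro δ hδ
      rw [map_smul, LinearMap.smul_apply, smul_eq_mul]
      exact mul_nonneg (hc0 δ hδ) (le_of_lt (pos_pair_e D he (hsimple δ hδ)))
    rcases lt_or_eq_of_le (Finset.sum_nonneg hterm) with h | h
    · exact h
    · exfalso
      have hz : ∀ δ ∈ D.simples, c δ = 0 := by
        intro δ hδ
        have h1 := (Finset.sum_eq_zero_iff_of_nonneg hterm).mp h.symm δ hδ
        rw [map_smul, LinearMap.smul_apply, smul_eq_mul] at h1
        rcases mul_eq_zero.mp h1 with h2 | h2
        · exact h2
        · exact absurd h2 (ne_of_gt (pos_pair_e D he (hsimple δ hδ)))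
      have : β = 0 := by
        rw [hcsum]
        apply Finset.sum_eq_zero
        intro δ hδ
        rw [hz δ hδ, zero_smul]
      exact D.roots_ne_zero β (D.posRoots_subset hβ) this
  exact mem_pos_of_e D he (D.actV_roots w β (D.posRoots_subset hβ)) hpos

lemma actV_s_invol {α : D.V} (hα : α ∈ D.roots) (v : D.V) :
    D.actV (D.s α) (D.actV (D.s α) v) = v := by
  rw [← actV_mul, s_sq D hα, actV_one]

/-- If `β` is a positive root which is not a positive multiple of the simple root `α`,
then `s_α β` is again a positive root which is not a positive multiple of `α`. -/
lemma s_perm {e : D.Vd} (he : ∀ δ ∈ D.simples, D.pairR δ e = 1)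
    {α : D.V} (hαs : α ∈ D.simples) {β : D.V} (hβ : β ∈ D.posRoots)
    (hmult : ∀ c : ℝ, 0 < c → β ≠ c • α) :
    D.actV (D.s α) β ∈ D.posRoots ∧ ∀ c : ℝ, 0 < c → D.actV (D.s α) β ≠ c • α := by
  have hαr : α ∈ D.roots := D.posRoots_subset (D.simples_subset hαs)
  have hβr : β ∈ D.roots := D.posRoots_subset hβ
  have hsr : D.actV (D.s α) β ∈ D.roots := D.actV_roots _ _ hβr
  have hnotmult : ∀ c : ℝ, 0 < c → D.actV (D.s α) β ≠ c • α := by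
    intro c hc hEq
    have hββ : β = -(c • α) := by
      have := actV_s_invol D hαr β
      rw [hEq] at this
      rw [← this, map_smul, actV_s_self D hαr, smul_neg]
    have : D.pairR β e = -(c * D.pairR α e) := by
      rw [hββ, map_neg, LinearMap.neg_apply, map_smul, LinearMap.smul_apply, smul_eq_mul]
    rw [he α hαs, mul_one] at this
    have hp := pos_pair_e D he hβ
    rw [this] at hp
    linarith
  refine ⟨?_, hnotmult⟩
  by_contra hneg
  have hnegpos : -(D.actV (D.s α) β) ∈ D.posRoots := by
    rcases D.roots_pos_or_neg _ hsr with h | h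
    · exact absurd h hneg
    · exact h
  -- expand in terms of simple roots
  obtain ⟨c, hc0, hcsum, _⟩ := pair_sum_simples D hβ e
  obtain ⟨c', hc'0, hc'sum, _⟩ := pair_sum_simples D hnegpos e
  set k := D.pairR β (D.cv α) with hk
  have hsβ : D.actV (D.s α) β = β - k • α := D.actV_s α hαr β
  -- find a simple δ₀ ≠ α with c δ₀ > 0
  have hδ0 : ∃ δ₀ ∈ D.simples, δ₀ ≠ α ∧ 0 < c δ₀ := by
    by_contra hno
    push_neg at hno
    have hcz : ∀ δ ∈ D.simples, δ ≠ α → c δ = 0 := by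
      intro δ hδ hne
      exact le_antisymm (hno δ hδ hne) (hc0 δ hδ)
    have hβeq : β = c α • α := by
      rw [hcsum]
      apply Finset.sum_eq_single_of_mem α hαs
      intro δ hδ hne
      rw [hcz δ hδ hne, zero_smul]
    rcases lt_or_eq_of_le (hc0 α hαs) with h | h
    · exact hmult (c α) h hβeq
    · apply D.roots_ne_zero β hβr
      rw [hβeq, ← h, zero_smul]
  obtain ⟨δ₀, hδ₀s, hδ₀ne, hδ₀pos⟩ := hδ0
  -- sum relation: (β - k•α) + (-(sβ)) = 0
  have hzero : ∑ δ ∈ D.simples, ((c δ + c' δ) - (if δ = α then k else 0)) • δ = 0 := by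
    have h1 : ∑ δ ∈ D.simples, ((c δ + c' δ) - (if δ = α then k else 0)) • δ
        = (∑ δ ∈ D.simples, c δ • δ) + (∑ δ ∈ D.simples, c' δ • δ)
          - (∑ δ ∈ D.simples, (if δ = α then k else 0) • δ) := by
      rw [← Finset.sum_add_distrib, ← Finset.sum_sub_distrib]
      apply Finset.sum_congr rfl
      intro δ _
      rw [sub_smul, add_smul]
    have h2 : ∑ δ ∈ D.simples, (if δ = α then k else 0) • δ = k • α := by
      simp only [ite_smul, zero_smul]
      rw [Finset.sum_ite_eq' D.simples α (fun δ => k • δ), if_pos hαs]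
    rw [h1, h2, ← hcsum, ← hc'sum, hsβ]
    module
  have := simple_comb_eq_zero D hzero δ₀ hδ₀s
  rw [if_neg hδ₀ne, sub_zero] at this
  have := hc'0 δ₀ hδ₀s
  linarith

/-- Key counting lemma: if `w α < 0` for a simple root `α`, the inversion set of
`w * s_α` is strictly smaller. -/
lemma inv_card_lt {e : D.Vd} (he : ∀ δ ∈ D.simples, D.pairR δ e = 1)
    {w : D.W} {α : D.V} (hαs : α ∈ D.simples) (hneg : -(D.actV w α) ∈ D.posRoots) :
    (Inv D (w * D.s α)).card < (Inv D w).card := by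
  classical
  have hαr : α ∈ D.roots := D.posRoots_subset (D.simples_subset hαs)
  have hαp : α ∈ D.posRoots := D.simples_subset hαs
  set A := Inv D w with hA
  set A' := Inv D (w * D.s α) with hA'
  set Mult : Finset D.V := D.posRoots.filter (fun β => ∃ c : ℝ, 0 < c ∧ β = c • α) with hMult
  have hwαe : D.pairR (D.actV w α) e < 0 := by
    have := pos_pair_e D he hneg
    rw [map_neg, LinearMap.neg_apply] at this
    linarith
  -- α ∈ Mult
  have hαMult : α ∈ Mult := by
    rw [hMult, Finset.mem_filter]
    exact ⟨hαp, ⟨1, one_pos, (one_smul ℝ α).symm⟩⟩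
  -- Mult ⊆ A
  have hMultA : Mult ⊆ A := by
    intro β hβ
    rw [hMult, Finset.mem_filter] at hβ
    obtain ⟨hβp, c, hc, hβeq⟩ := hβ
    rw [hA, Inv, Finset.mem_filter]
    refine ⟨hβp, ?_⟩
    have hβr : β ∈ D.roots := D.posRoots_subset hβp
    have hwβr : -(D.actV w β) ∈ D.roots := roots_neg_mem D (D.actV_roots w β hβr)
    apply mem_pos_of_e D he hwβr
    have : -(D.actV w β) = c • (-(D.actV w α)) := by
      rw [hβeq, map_smul, smul_neg]
    rw [this, map_smul, LinearMap.smul_apply, smul_eq_mul]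
    exact mul_pos hc (pos_pair_e D he hneg)
  -- A' ∩ Mult = ∅
  have hA'Mult : ∀ γ ∈ A', γ ∉ Mult := by
    intro γ hγ hγM
    rw [hMult, Finset.mem_filter] at hγM
    obtain ⟨hγp, c, hc, hγeq⟩ := hγM
    rw [hA', Inv, Finset.mem_filter] at hγ
    obtain ⟨_, hγneg⟩ := hγ
    have h1 : D.actV (w * D.s α) γ = c • (-(D.actV w α)) := by
      rw [hγeq, map_smul, actV_mul, actV_s_self D hαr, map_neg, smul_neg]
    have h2 : -(D.actV (w * D.s α) γ) = c • (D.actV w α) := by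
      rw [h1]; simp
    have := pos_pair_e D he hγneg
    rw [h2, map_smul, LinearMap.smul_apply, smul_eq_mul] at this
    nlinarith
  -- injection from A' into A \ Mult
  have hmap : ∀ γ ∈ A', D.actV (D.s α) γ ∈ A \ Mult := by
    intro γ hγ
    have hγA' := hγ
    rw [hA', Inv, Finset.mem_filter] at hγ
    obtain ⟨hγp, hγneg⟩ := hγ
    have hmult : ∀ c : ℝ, 0 < c → γ ≠ c • α := by
      intro c hc hEq
      exact hA'Mult γ hγA' (by rw [hMult, Finset.mem_filter]; exact ⟨hγp, c, hc, hEq⟩)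
    obtain ⟨hsp, hsm⟩ := s_perm D he hαs hγp hmult
    rw [Finset.mem_sdiff]
    constructor
    · rw [hA, Inv, Finset.mem_filter]
      refine ⟨hsp, ?_⟩
      rw [actV_mul] at hγneg
      exact hγneg
    · intro hmem
      rw [hMult, Finset.mem_filter] at hmem
      obtain ⟨_, c, hc, hEq⟩ := hmem
      exact hsm c hc hEq
  have hinj : Set.InjOn (fun γ => D.actV (D.s α) γ) ↑A' := by
    intro γ₁ h₁ γ₂ h₂ hEq
    have := congrArg (D.actV (D.s α)) hEq
    simp only at this
    rwa [actV_s_invol D hαr, actV_s_invol D hαr] at this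
  have hcard1 : A'.card ≤ (A \ Mult).card :=
    Finset.card_le_card_of_injOn _ hmap hinj
  have hcard2 : (A \ Mult).card < A.card := by
    apply Finset.card_lt_card
    rw [Finset.ssubset_iff_of_subset (Finset.sdiff_subset)]
    exact ⟨α, hMultA hαMult, by simp [hαMult]⟩
  omega

end InvSet

end StmtAux
namespace StmtAux
open GHA

variable (D : GHA)

section WMLemmas

variable (PiM : Finset D.V)

lemma s_mem_WM {α : D.V} (hα : α ∈ PiM) : D.s α ∈ D.WM PiM :=
  Subgroup.subset_closure ⟨α, by exact_mod_cast hα, rfl⟩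

lemma one_minrep : D.IsMinRep PiM 1 := by
  intro α hα
  rw [actV_one]
  exact hα.1

lemma minrep_in_WM_eq_one (cd : CosetData D PiM) {x : D.W}
    (hx : D.IsMinRep PiM x) (hxw : x ∈ D.WM PiM) : x = 1 := by
  have h1 := cd.uniq x x 1 hx (Subgroup.one_mem _) (mul_one x).symm
  have h2 := cd.uniq x 1 x (one_minrep D PiM) hxw (one_mul x).symm
  rw [h1.1, ← h2.1]

variable (hPiM : PiM ⊆ D.simples)
variable {lam : D.Vd}
variable (hlam2 : ∀ δ ∈ PiM, D.pairR δ lam = 0)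

include hPiM hlam2 in
lemma WM_fix : ∀ m ∈ D.WM PiM, D.actVd m lam = lam := by
  intro m hm
  induction hm using Subgroup.closure_induction with
  | mem x hx =>
    obtain ⟨α, hα, rfl⟩ := hx
    have hαM : α ∈ PiM := by exact_mod_cast hα
    have hαr : α ∈ D.roots := D.posRoots_subset (D.simples_subset (hPiM hαM))
    rw [D.actVd_s α hαr, hlam2 α hαM, zero_smul, sub_zero]
  | one => rw [actVd_one]
  | mul x y hx hy ihx ihy => rw [actVd_mul, ihy, ihx]
  | inv x hx ihx =>
    conv_lhs => rw [← ihx]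
    rw [← actVd_mul, inv_mul_cancel, actVd_one]

end WMLemmas

section ConeStab

variable (PiM : Finset D.V) (hPiM : PiM ⊆ D.simples)
variable {e : D.Vd} (he : ∀ δ ∈ D.simples, D.pairR δ e = 1)
variable {lam : D.Vd}
variable (hlam1 : ∀ δ ∈ D.simples, 0 ≤ D.pairR δ lam)
variable (hlam2 : ∀ δ ∈ PiM, D.pairR δ lam = 0)
variable (hlam3 : ∀ δ ∈ D.simples, D.pairR δ lam = 0 → δ ∈ PiM)

include he hlam1 in
lemma cone_lemma : ∀ (n : ℕ) (w : D.W), (Inv D w).card ≤ n →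
    ∃ t : D.V → ℝ, (∀ γ ∈ D.posRoots, 0 ≤ t γ) ∧
      lam - D.actVd w lam = ∑ γ ∈ D.posRoots, t γ • D.cv γ := by
  intro n
  induction n with
  | zero =>
    intro w hw
    by_cases h1 : w = 1
    · subst h1
      refine ⟨fun _ => 0, fun _ _ => le_refl 0, ?_⟩
      rw [actVd_one]
      simp
    · obtain ⟨α, hαs, hneg⟩ := exists_simple_neg D he h1
      have := inv_card_lt D he hαs hneg
      omega
  | succ n ih =>
    intro w hw
    by_cases h1 : w = 1
    · subst h1
      refine ⟨fun _ => 0, fun _ _ => le_refl 0, ?_⟩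
      rw [actVd_one]
      simp
    · obtain ⟨α, hαs, hneg⟩ := exists_simple_neg D he h1
      have hcard := inv_card_lt D he hαs hneg
      obtain ⟨t', ht'0, ht'⟩ := ih (w * D.s α) (by omega)
      have hαr : α ∈ D.roots := D.posRoots_subset (D.simples_subset hαs)
      set γ := -(D.actV w α) with hγ
      have hγp : γ ∈ D.posRoots := hneg
      have hγr : γ ∈ D.roots := D.posRoots_subset hγp
      have hw' : w = (w * D.s α) * D.s α := by
        rw [mul_assoc, s_sq D hαr, mul_one]
      have hstep : D.actVd w lam = D.actVd (w * D.s α) lam - (D.pairR α lam) • D.cv γ := by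
        conv_lhs => rw [hw']
        rw [actVd_mul, D.actVd_s α hαr]
        rw [map_sub, map_smul]
        congr 1
        rw [actVd_mul, actVd_s_cv D hαr, map_neg, cv_equivariant D w hαr]
        have : D.cv (D.actV w α) = -(D.cv γ) := by
          rw [hγ, cv_neg D (D.actV_roots w α hαr)]
          simp
        rw [this]
        simp
      refine ⟨fun β => t' β + (if β = γ then D.pairR α lam else 0), ?_, ?_⟩
      · intro β hβ
        dsimp only
        have h0 : (0:ℝ) ≤ if β = γ then D.pairR α lam else 0 := by
          split
          · exact hlam1 α hαs
          · exact le_refl 0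
        have := ht'0 β hβ
        linarith
      · have hsplit : ∑ β ∈ D.posRoots, (t' β + if β = γ then D.pairR α lam else 0) • D.cv β
            = (∑ β ∈ D.posRoots, t' β • D.cv β) + (D.pairR α lam) • D.cv γ := by
          have hterm : ∀ β ∈ D.posRoots,
              (t' β + if β = γ then D.pairR α lam else 0) • D.cv β
                = t' β • D.cv β + (if β = γ then D.pairR α lam else 0) • D.cv β :=
            fun β _ => add_smul _ _ _
          rw [Finset.sum_congr rfl hterm, Finset.sum_add_distrib]
          congr 1
          simp only [ite_smul, zero_smul]
          rw [Finset.sum_ite_eq' D.posRoots γ (fun β => D.pairR α lam • D.cv β), if_pos hγp]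
        rw [hsplit, ← ht', hstep]
        module

include he hlam1 hlam3 in
lemma stab_lemma : ∀ (n : ℕ) (w : D.W), (Inv D w).card ≤ n →
    D.actVd w lam = lam → w ∈ D.WM PiM := by
  intro n
  induction n with
  | zero =>
    intro w hw hfix
    by_cases h1 : w = 1
    · subst h1; exact Subgroup.one_mem _
    · obtain ⟨α, hαs, hneg⟩ := exists_simple_neg D he h1
      have := inv_card_lt D he hαs hneg
      omega
  | succ n ih =>
    intro w hw hfix
    by_cases h1 : w = 1
    · subst h1; exact Subgroup.one_mem _
    · obtain ⟨α, hαs, hneg⟩ := exists_simple_neg D he h1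
      have hcard := inv_card_lt D he hαs hneg
      have hαr : α ∈ D.roots := D.posRoots_subset (D.simples_subset hαs)
      set γ := -(D.actV w α) with hγ
      have hγp : γ ∈ D.posRoots := hneg
      have hzero : D.pairR α lam = 0 := by
        have h2 : D.pairR (D.actV w α) (D.actVd w lam) = D.pairR α lam := D.act_pair w α lam
        rw [hfix] at h2
        have h3 : D.pairR (D.actV w α) lam = -(D.pairR γ lam) := by
          rw [hγ, map_neg, LinearMap.neg_apply]
          simp
        have h4 : 0 ≤ D.pairR γ lam := pos_pair D hlam1 hγp
        have h5 : 0 ≤ D.pairR α lam := hlam1 α hαs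
        rw [h3] at h2
        linarith
      have hαM : α ∈ PiM := hlam3 α hαs hzero
      have hfix' : D.actVd (w * D.s α) lam = lam := by
        rw [actVd_mul, D.actVd_s α hαr, hzero, zero_smul, sub_zero, hfix]
      have hmem := ih (w * D.s α) (by omega) hfix'
      have : w = (w * D.s α) * D.s α := by
        rw [mul_assoc, s_sq D hαr, mul_one]
      rw [this]
      exact Subgroup.mul_mem _ hmem (s_mem_WM D PiM hαM)

end ConeStab

end StmtAux
namespace StmtAux
open GHA

variable (D : GHA)

section Complexify

lemma re_pairC (v : D.V) (y : D.VdC) :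
    (D.pairC (D.iV v) y).re = D.pairR v (D.reVd y) := by
  conv_lhs => rw [D.vdc_decomp y]
  rw [D.pairC_add_right, D.pairC_smul_right, D.pairC_compat, D.pairC_compat]
  simp [Complex.add_re, Complex.mul_re]

lemma actVC_decomp (w : D.W) (a : D.VC) :
    D.actVC w a = D.iV (D.actV w (D.reV a)) + Complex.I • D.iV (D.actV w (D.imV a)) := by
  conv_lhs => rw [D.vc_decomp a]
  rw [map_add, map_smul, D.actVC_iV, D.actVC_iV]

lemma actVdC_decomp (w : D.W) (y : D.VdC) :
    D.actVdC w y = D.iVd (D.actVd w (D.reVd y)) + Complex.I • D.iVd (D.actVd w (D.imVd y)) := by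
  conv_lhs => rw [D.vdc_decomp y]
  rw [map_add, map_smul, D.actVdC_iVd, D.actVdC_iVd]

lemma pairC_act (w : D.W) (a : D.VC) (y : D.VdC) :
    D.pairC (D.actVC w a) (D.actVdC w y) = D.pairC a y := by
  rw [actVC_decomp, actVdC_decomp]
  conv_rhs => rw [D.vc_decomp a, D.vdc_decomp y]
  simp only [D.pairC_add_left, D.pairC_add_right, D.pairC_smul_left, D.pairC_smul_right,
    D.pairC_compat, D.act_pair]

/-- `⟨iV v, w y⟩ = ⟨iV (w⁻¹ v), y⟩`. -/
lemma pairC_act_right (w : D.W) (v : D.V) (y : D.VdC) :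
    D.pairC (D.iV v) (D.actVdC w y) = D.pairC (D.iV (D.actV w⁻¹ v)) y := by
  have := pairC_act D w (D.iV (D.actV w⁻¹ v)) y
  rw [D.actVC_iV, actV_inv_apply] at this
  exact this

end Complexify

section KeyLemmas

variable (PiM : Finset D.V) (hPiM : PiM ⊆ D.simples)
variable {e : D.Vd} (he : ∀ δ ∈ D.simples, D.pairR δ e = 1)
variable (G : GoodForm D)
variable {lam : D.Vd}
variable (hlam1 : ∀ δ ∈ D.simples, 0 ≤ D.pairR δ lam)
variable (hlam2 : ∀ δ ∈ PiM, D.pairR δ lam = 0)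
variable (hlam3 : ∀ δ ∈ D.simples, D.pairR δ lam = 0 → δ ∈ PiM)

include hPiM he G hlam1 hlam2 hlam3 in
/-- KEY 1: a minimal-length coset representative `x` with
`x (λ - d'') = λ - d`, for `d, d''` nonnegative combinations of coroots of
`Π_M`, must be the identity. -/
lemma key1 (cd : CosetData D PiM) {x : D.W} (hx : D.IsMinRep PiM x)
    {d d'' : D.V → ℝ} (hd : ∀ α ∈ PiM, 0 ≤ d α) (hd'' : ∀ α ∈ PiM, 0 ≤ d'' α)
    (heq : D.actVd x (lam - ∑ α ∈ PiM, d'' α • D.cv α)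
      = lam - ∑ α ∈ PiM, d α • D.cv α) : x = 1 := by
  have hroots : ∀ α ∈ PiM, α ∈ D.roots :=
    fun α hα => D.posRoots_subset (D.simples_subset (hPiM hα))
  set dv := ∑ α ∈ PiM, d α • D.cv α with hdv
  set dv'' := ∑ α ∈ PiM, d'' α • D.cv α with hdv''
  -- B(λ, dv) = 0
  have hB1 : G.B lam dv = 0 := by
    rw [hdv, map_sum]
    apply Finset.sum_eq_zero
    intro α hα
    rw [map_smul, smul_eq_mul]
    have : G.B lam (D.cv α) = G.B (D.cv α) lam := G.symm _ _
    rw [this, G.coroot' (hroots α hα), hlam2 α hα, mul_zero, mul_zero]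
  -- B(λ, x dv'') ≥ 0
  have hB2 : 0 ≤ G.B lam (D.actVd x dv'') := by
    rw [hdv'', map_sum, map_sum]
    apply Finset.sum_nonneg
    intro α hα
    rw [map_smul, map_smul, smul_eq_mul]
    apply mul_nonneg (hd'' α hα)
    rw [cv_equivariant D x (hroots α hα)]
    have hxα : D.actV x α ∈ D.posRoots := by
      apply hx
      constructor
      · exact D.simples_subset (hPiM hα)
      · exact Submodule.subset_span (by exact_mod_cast hα)
    have hxαr : D.actV x α ∈ D.roots := D.posRoots_subset hxα
    have hsym : G.B lam (D.cv (D.actV x α)) = G.B (D.cv (D.actV x α)) lam := G.symm _ _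
    rw [hsym, G.coroot' hxαr]
    apply mul_nonneg
    · apply div_nonneg _ (by norm_num)
      exact G.nonneg _
    · exact pos_pair D hlam1 hxα
  -- from the equation : B(λ, xλ) = B(λ,λ) + B(λ, x dv'')
  have heq2 : D.actVd x lam = lam - dv + D.actVd x dv'' := by
    have := heq
    rw [map_sub] at this
    rw [← this]
    module
  have h3 : G.B lam (D.actVd x lam) = G.B lam lam - G.B lam dv + G.B lam (D.actVd x dv'') := by
    rw [heq2, map_add, map_sub]
  rw [hB1, sub_zero] at h3
  -- Cauchy-Schwarz style bound
  have h4 : 0 ≤ G.B (lam - D.actVd x lam) (lam - D.actVd x lam) := G.nonneg _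
  have h5 : G.B (lam - D.actVd x lam) (lam - D.actVd x lam)
      = 2 * G.B lam lam - 2 * G.B lam (D.actVd x lam) := by
    simp only [map_sub, LinearMap.sub_apply]
    have i1 : G.B (D.actVd x lam) (D.actVd x lam) = G.B lam lam := G.inv x lam lam
    have i2 : G.B (D.actVd x lam) lam = G.B lam (D.actVd x lam) := G.symm _ _
    rw [i1, i2]
    ring
  have h6 : G.B lam (D.actVd x lam) ≤ G.B lam lam := by linarith
  have h7 : G.B (lam - D.actVd x lam) (lam - D.actVd x lam) = 0 := by linarith
  have hfix : D.actVd x lam = lam := by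
    have := G.definite _ h7
    have := sub_eq_zero.mp this
    exact this.symm
  have hxW := stab_lemma D PiM he hlam1 hlam3 ((Inv D x).card) x (le_refl _) hfix
  exact minrep_in_WM_eq_one D PiM cd hx hxW

include hPiM he hlam1 hlam2 in
/-- KEY 2: the height function `F` strictly increases along the off-diagonal
terms of the induced action. -/
lemma F_incr (cd : CosetData D PiM) {x : D.W} (hx : D.IsMinRep PiM x) {β : D.V}
    (hβ : β ∈ D.posRoots) (hβ2 : -(D.actV x⁻¹ β) ∈ D.posRoots)
    (hlam3 : ∀ δ ∈ D.simples, D.pairR δ lam = 0 → δ ∈ PiM) :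
    G.B e (D.actVd x lam) < G.B e (D.actVd (cd.c (D.s β * x)) lam) := by
  have hβr : β ∈ D.roots := D.posRoots_subset hβ
  set γ := -(D.actV x⁻¹ β) with hγ
  have hγp : γ ∈ D.posRoots := hβ2
  -- the coset representative acts like s_β x on lam
  have hact : D.actVd (cd.c (D.s β * x)) lam = D.actVd (D.s β) (D.actVd x lam) := by
    have hf := cd.factor (D.s β * x)
    have hc : cd.c (D.s β * x) = (D.s β * x) * (cd.m (D.s β * x))⁻¹ :=
      eq_mul_inv_iff_mul_eq.mpr hf.symm
    rw [hc, actVd_mul, actVd_mul]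
    congr 1
    congr 1
    exact WM_fix D PiM hPiM hlam2 _ (Subgroup.inv_mem _ (cd.m_mem _))
  -- pairing positivity
  have htpos : 0 < D.pairR γ lam := by
    rcases lt_or_eq_of_le (pos_pair D hlam1 hγp) with h | h
    · exact h
    · exfalso
      have hspan : γ ∈ Submodule.span ℝ (PiM : Set D.V) :=
        span_PiM_of_pair_zero D PiM hlam1 hlam3 hγp h.symm
      have hγM : γ ∈ D.RplusM PiM := ⟨hγp, hspan⟩
      have := hx γ hγM
      have hxγ : D.actV x γ = -β := by
        rw [hγ, map_neg, actV_inv_apply]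
      rw [hxγ] at this
      exact D.posRoots_not_neg β hβ this
  have hpair : D.pairR β (D.actVd x lam) = -(D.pairR γ lam) := by
    rw [pair_act_right, hγ, map_neg, LinearMap.neg_apply]
    simp
  have hstep : D.actVd (D.s β) (D.actVd x lam)
      = D.actVd x lam + (D.pairR γ lam) • D.cv β := by
    rw [D.actVd_s β hβr, hpair]
    module
  rw [hact, hstep, map_add, map_smul, smul_eq_mul]
  have hBpos : 0 < G.B e (D.cv β) := by
    have : G.B e (D.cv β) = G.B (D.cv β) e := G.symm _ _
    rw [this, G.coroot' hβr]
    apply mul_pos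
    · apply div_pos _ (by norm_num)
      exact G.pos (cv_ne_zero D hβr)
    · exact pos_pair_e D he hβ
  nlinarith

include hPiM he hlam1 hlam3 in
/-- The identity coset maximizes the height function `F` on `J_M`. -/
lemma F_max (cd : CosetData D PiM) {x : D.W} (hx : D.IsMinRep PiM x) (hne : x ≠ 1) :
    G.B e (D.actVd x lam) < G.B e lam := by
  obtain ⟨t, ht0, ht⟩ := cone_lemma D he hlam1 ((Inv D x).card) x (le_refl _)
  have hterm : ∀ γ ∈ D.posRoots, 0 ≤ t γ * G.B e (D.cv γ) := by
    intro γ hγ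
    apply mul_nonneg (ht0 γ hγ)
    have : G.B e (D.cv γ) = G.B (D.cv γ) e := G.symm _ _
    rw [this, G.coroot' (D.posRoots_subset hγ)]
    apply mul_nonneg
    · apply div_nonneg _ (by norm_num)
      exact G.nonneg _
    · exact le_of_lt (pos_pair_e D he hγ)
  have hdiff : G.B e lam - G.B e (D.actVd x lam) = ∑ γ ∈ D.posRoots, t γ * G.B e (D.cv γ) := by
    rw [← map_sub, ht, map_sum]
    apply Finset.sum_congr rfl
    intro γ _
    rw [map_smul, smul_eq_mul]
  rcases lt_or_eq_of_le (Finset.sum_nonneg hterm) with h | h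
  · linarith [hdiff ▸ h]
  · exfalso
    -- all terms vanish, so x fixes lam, hence x ∈ W_M, hence x = 1
    have hz : ∀ γ ∈ D.posRoots, t γ = 0 := by
      intro γ hγ
      have h1 := (Finset.sum_eq_zero_iff_of_nonneg hterm).mp h.symm γ hγ
      rcases mul_eq_zero.mp h1 with h2 | h2
      · exact h2
      · exfalso
        have hBpos : 0 < G.B e (D.cv γ) := by
          have : G.B e (D.cv γ) = G.B (D.cv γ) e := G.symm _ _
          rw [this, G.coroot' (D.posRoots_subset hγ)]
          apply mul_pos
          · apply div_pos _ (by norm_num)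
            exact G.pos (cv_ne_zero D (D.posRoots_subset hγ))
          · exact pos_pair_e D he hγ
        rw [h2] at hBpos
        exact lt_irrefl 0 hBpos
    have hfix : D.actVd x lam = lam := by
      have : lam - D.actVd x lam = 0 := by
        rw [ht]
        apply Finset.sum_eq_zero
        intro γ hγ
        rw [hz γ hγ, zero_smul]
      have := sub_eq_zero.mp this
      exact this.symm
    have hxW := stab_lemma D PiM he hlam1 hlam3 ((Inv D x).card) x (le_refl _) hfix
    exact hne (minrep_in_WM_eq_one D PiM cd hx hxW)

end KeyLemmas

end StmtAux
namespace StmtAux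
open GHA

variable (D : GHA)

lemma mem_wtAux {X : Type} [AddCommGroup X] [Module ℂ X]
    (T : D.VC → Module.End ℂ X) (lam : D.VdC) (x : X) :
    x ∈ D.wtAux T lam ↔
      ∀ ω : D.VC, ∃ n : ℕ, ((T ω - D.pairC ω lam • (1 : Module.End ℂ X)) ^ n) x = 0 :=
  Iff.rfl

lemma mem_wtH {X : Type} [AddCommGroup X] [Module ℂ X]
    (πI : D.H →ₐ[ℂ] Module.End ℂ X) (μ : D.VdC) (x : X) :
    x ∈ D.wtH πI μ ↔
      ∀ ω : D.VC, ∃ n : ℕ,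
        ((πI (D.θ ω) - D.pairC ω μ • (1 : Module.End ℂ X)) ^ n) x = 0 :=
  Iff.rfl

end StmtAux
open GHA in
/-- if the weights of σ are ν-dominant as stated, then for every
weight μ of U the generalized weight multiplicity of μ in X(M,σ) equals that
in U. -/
theorem stmt_7 (D : GHA) (PiM : Finset D.V) (hPiM : PiM ⊆ D.simples)
    (cd : GHA.CosetData D PiM)
    {U : Type} [AddCommGroup U] [Module ℂ U] [FiniteDimensional ℂ U]
    (σ : D.HM PiM →ₐ[ℂ] Module.End ℂ U)
    (ν : D.VdC)
    (hν1 : ∀ α ∈ PiM, D.pairC (D.iV α) ν = 0)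
    (hν2 : ∀ α ∈ D.simples, α ∉ PiM → 0 < D.pairR α (D.reVd ν))
    (hwts : ∀ μ : D.VdC, D.wtAux (fun ω => σ (D.θM PiM ω)) μ ≠ ⊥ →
      (μ - ν ∈ Submodule.span ℂ ((fun α => D.iVd (D.cv α)) '' (PiM : Set D.V)) ∧
       ∃ d : D.V → ℝ, (∀ α ∈ PiM, 0 ≤ d α) ∧
         D.reVd (μ - ν) = -∑ α ∈ PiM, d α • D.cv α))
    (πI : D.H →ₐ[ℂ] Module.End ℂ (D.JM PiM → U))
    (hπI : GHA.IsInducedAction D PiM cd σ πI) :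
    ∀ μ : D.VdC, D.wtAux (fun ω => σ (D.θM PiM ω)) μ ≠ ⊥ →
      Module.finrank ℂ (D.wtH πI μ) =
      Module.finrank ℂ (D.wtAux (fun ω => σ (D.θM PiM ω)) μ) := by
  classical
  obtain ⟨e, he⟩ := StmtAux.exists_e D
  obtain ⟨G⟩ := StmtAux.exists_goodForm D
  set lam := D.reVd ν with hlamdef
  -- dominance properties of `lam`
  have hlam2 : ∀ δ ∈ PiM, D.pairR δ lam = 0 := by
    intro δ hδ
    have h := hν1 δ hδ
    have h2 := StmtAux.re_pairC D δ ν
    rw [h] at h2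
    rw [← h2]
    simp
  have hlam1 : ∀ δ ∈ D.simples, 0 ≤ D.pairR δ lam := by
    intro δ hδ
    by_cases hm : δ ∈ PiM
    · rw [hlam2 δ hm]
    · exact le_of_lt (hν2 δ hδ hm)
  have hlam3 : ∀ δ ∈ D.simples, D.pairR δ lam = 0 → δ ∈ PiM := by
    intro δ hδ h0
    by_contra hm
    have h := hν2 δ hδ hm
    rw [h0] at h
    exact lt_irrefl 0 h
  intro μ hμ
  letI : DecidablePred (D.IsMinRep PiM) := Classical.decPred _
  -- the height function
  set F : D.W → ℝ := fun z => G.B e (D.actVd z lam) with hF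
  have hFdef : ∀ z : D.W, F z = G.B e (D.actVd z lam) := fun z => rfl
  -- μ = ν + (nonpositive combination)
  obtain ⟨-, d, hd0, hdre⟩ := hwts μ hμ
  have hre : D.reVd μ = lam - ∑ α ∈ PiM, d α • D.cv α := by
    rw [map_sub] at hdre
    have h := eq_add_of_sub_eq hdre
    rw [h]
    abel
  -- KEY 1, packaged: nontrivial minimal representatives kill the weight space
  have hzero : ∀ x : D.JM PiM, x.1 ≠ 1 →
      D.wtAux (fun ω => σ (D.θM PiM ω)) (D.actVdC x.1⁻¹ μ) = ⊥ := by
    intro x hx1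
    by_contra hbot
    obtain ⟨-, d'', hd''0, hd''re⟩ := hwts _ hbot
    set μ'' := D.actVdC x.1⁻¹ μ with hμ''
    have hre'' : D.reVd μ'' = lam - ∑ α ∈ PiM, d'' α • D.cv α := by
      rw [map_sub] at hd''re
      have h := eq_add_of_sub_eq hd''re
      rw [h]
      abel
    have hvec : D.actVd x.1 (D.reVd μ'') = D.reVd μ := by
      have hnd : ∀ v : D.V,
          D.pairR v (D.actVd x.1 (D.reVd μ'') - D.reVd μ) = 0 := by
        intro v
        rw [map_sub]
        have h1 : D.pairR v (D.actVd x.1 (D.reVd μ'')) = D.pairR v (D.reVd μ) := by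
          rw [StmtAux.pair_act_right D x.1 v (D.reVd μ'')]
          rw [← StmtAux.re_pairC D (D.actV x.1⁻¹ v) μ'']
          rw [← StmtAux.re_pairC D v μ]
          congr 1
          rw [hμ'', ← D.actVC_iV x.1⁻¹ v]
          exact StmtAux.pairC_act D x.1⁻¹ (D.iV v) μ
        rw [h1, sub_self]
      have h := D.pair_nondeg_right _ hnd
      exact sub_eq_zero.mp h
    rw [hre'', hre] at hvec
    exact hx1 (StmtAux.key1 D PiM hPiM he G hlam1 hlam2 hlam3 cd x.2 hd0 hd''0 hvec)
  -- the triangular computation for the action of θ(ω)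
  have hstep : ∀ (r : ℝ) (g : D.JM PiM → U) (ω : D.VC),
      (∀ z : D.JM PiM, F z.1 < r → g z = 0) →
      ∀ p : D.JM PiM, F p.1 ≤ r →
        (πI (D.θ ω) g) p = (σ (D.θM PiM (D.actVC p.1⁻¹ ω))) (g p) := by
    intro r g ω hg p hp
    have hrep : πI (D.θ ω) g = ∑ z : D.JM PiM, πI (D.θ ω) (Pi.single z (g z)) := by
      conv_lhs => rw [← Finset.univ_sum_single g]
      rw [map_sum]
    rw [hrep, Finset.sum_apply]
    have hterm : ∀ z : D.JM PiM,
        (πI (D.θ ω) (Pi.single z (g z))) p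
          = (Pi.single z ((σ (D.θM PiM (D.actVC z.1⁻¹ ω))) (g z)) : D.JM PiM → U) p := by
      intro z
      rw [hπI.2 ω z (g z)]
      rw [Pi.add_apply]
      have hoff : (∑ β ∈ D.posRoots.filter (fun β => -(D.actV z.1⁻¹ β) ∈ D.posRoots),
            ((D.kpar β : ℂ) * D.pairC ω (D.iVd (D.cv β))) •
              (Pi.single (⟨cd.c (D.s β * z.1), cd.c_min _⟩ : D.JM PiM)
                (σ (D.tM PiM (cd.m (D.s β * z.1)) (cd.m_mem _)) (g z)) : D.JM PiM → U)) p
          = 0 := by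
        rw [Finset.sum_apply]
        apply Finset.sum_eq_zero
        intro β hβ
        rw [Finset.mem_filter] at hβ
        rw [Pi.smul_apply]
        by_cases hz : g z = 0
        · rw [hz, map_zero, Pi.single_zero]
          simp
        · have hFz : r ≤ F z.1 := by
            by_contra hc
            push_neg at hc
            exact hz (hg z hc)
          have hFtgt : F z.1 < F (cd.c (D.s β * z.1)) := by
            rw [hFdef, hFdef]
            exact StmtAux.F_incr D PiM hPiM he G hlam1 hlam2 cd z.2 hβ.1 hβ.2 hlam3
          have hne : p ≠ (⟨cd.c (D.s β * z.1), cd.c_min _⟩ : D.JM PiM) := by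
            intro hEq
            have hFp : F p.1 = F (cd.c (D.s β * z.1)) := by rw [hEq]
            rw [hFp] at hp
            linarith
          rw [Pi.single_eq_of_ne hne]
          simp
      rw [hoff, add_zero]
    rw [Finset.sum_congr rfl (fun z _ => hterm z)]
    rw [Fintype.sum_pi_single p (fun z => (σ (D.θM PiM (D.actVC z.1⁻¹ ω))) (g z))]
  -- supports only move up
  have hsupp_stable : ∀ (r : ℝ) (g : D.JM PiM → U) (ω : D.VC),
      (∀ z : D.JM PiM, F z.1 < r → g z = 0) →
      ∀ z : D.JM PiM, F z.1 < r →
        ((πI (D.θ ω) - D.pairC ω μ • (1 : Module.End ℂ (D.JM PiM → U))) g) z = 0 := by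
    intro r g ω hg z hz
    rw [LinearMap.sub_apply, LinearMap.smul_apply, Module.End.one_apply]
    rw [Pi.sub_apply, Pi.smul_apply]
    rw [hstep r g ω hg z (le_of_lt hz), hg z hz, map_zero, smul_zero, sub_zero]
  -- iterated version
  have hTn : ∀ (r : ℝ) (ω : D.VC) (n : ℕ) (g : D.JM PiM → U),
      (∀ z : D.JM PiM, F z.1 < r → g z = 0) →
      (∀ z : D.JM PiM, F z.1 < r →
        (((πI (D.θ ω) - D.pairC ω μ • 1) ^ n) g) z = 0) ∧
      (∀ p : D.JM PiM, F p.1 = r →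
        (((πI (D.θ ω) - D.pairC ω μ • 1) ^ n) g) p
          = (((σ (D.θM PiM (D.actVC p.1⁻¹ ω)) - D.pairC ω μ • 1) ^ n) (g p))) := by
    intro r ω n
    induction n with
    | zero =>
      intro g hg
      constructor
      · intro z hz
        rw [pow_zero, Module.End.one_apply]
        exact hg z hz
      · intro p _
        rw [pow_zero, pow_zero, Module.End.one_apply, Module.End.one_apply]
    | succ n ih =>
      intro g hg
      set A := πI (D.θ ω) - D.pairC ω μ • (1 : Module.End ℂ (D.JM PiM → U)) with hA
      have hAg : ∀ z : D.JM PiM, F z.1 < r → (A g) z = 0 :=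
        hsupp_stable r g ω hg
      obtain ⟨ih1, ih2⟩ := ih (A g) hAg
      constructor
      · intro z hz
        rw [pow_succ, Module.End.mul_apply]
        exact ih1 z hz
      · intro p hp
        rw [pow_succ, Module.End.mul_apply, ih2 p hp]
        have hApt : (A g) p
            = ((σ (D.θM PiM (D.actVC p.1⁻¹ ω)) - D.pairC ω μ • 1)) (g p) := by
          rw [hA]
          rw [LinearMap.sub_apply, LinearMap.smul_apply, Module.End.one_apply,
            Pi.sub_apply, Pi.smul_apply]
          rw [hstep r g ω hg p (le_of_eq hp)]
          rw [LinearMap.sub_apply, LinearMap.smul_apply, Module.End.one_apply]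
        rw [hApt, ← Module.End.mul_apply, ← pow_succ]
  -- membership transfer at a minimal support element
  have hwcomp : ∀ (f : D.JM PiM → U), f ∈ D.wtH πI μ →
      ∀ x₀ : D.JM PiM, (∀ z : D.JM PiM, F z.1 < F x₀.1 → f z = 0) →
      f x₀ ∈ D.wtAux (fun ω => σ (D.θM PiM ω)) (D.actVdC x₀.1⁻¹ μ) := by
    intro f hf x₀ hsupp
    rw [StmtAux.mem_wtAux]
    intro ω'
    set ω := D.actVC x₀.1 ω' with hω
    obtain ⟨n, hn⟩ := (StmtAux.mem_wtH D πI μ f).mp hf ω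
    refine ⟨n, ?_⟩
    have h2 := (hTn (F x₀.1) ω n f hsupp).2 x₀ rfl
    rw [hn] at h2
    simp only [Pi.zero_apply] at h2
    have hσω : D.actVC x₀.1⁻¹ ω = ω' := by
      rw [hω, StmtAux.actVC_inv_apply']
    have hχ : D.pairC ω' (D.actVdC x₀.1⁻¹ μ) = D.pairC ω μ := by
      rw [← hσω]
      exact StmtAux.pairC_act D x₀.1⁻¹ ω μ
    rw [hσω, ← hχ] at h2
    exact h2.symm
  -- F is maximized at the identity coset
  have hFmax : ∀ z : D.JM PiM, z.1 ≠ 1 → F z.1 < F 1 := by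
    intro z hz
    rw [hFdef, hFdef, StmtAux.actVd_one]
    exact StmtAux.F_max D PiM hPiM he G hlam1 hlam3 cd z.2 hz
  -- weight vectors are supported at the identity coset
  have hsupp1 : ∀ (f : D.JM PiM → U), f ∈ D.wtH πI μ →
      ∀ z : D.JM PiM, z.1 ≠ 1 → f z = 0 := by
    intro f hf z hz
    by_contra hfz
    set Sf : Finset (D.JM PiM) := Finset.univ.filter (fun y => f y ≠ 0) with hSf
    have hneS : Sf.Nonempty :=
      ⟨z, by rw [hSf, Finset.mem_filter]; exact ⟨Finset.mem_univ _, hfz⟩⟩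
    obtain ⟨x₀, hx₀S, hx₀min⟩ := Finset.exists_min_image Sf (fun y => F y.1) hneS
    have hsupp : ∀ y : D.JM PiM, F y.1 < F x₀.1 → f y = 0 := by
      intro y hy
      by_contra hfy
      have hyS : y ∈ Sf := by rw [hSf, Finset.mem_filter]; exact ⟨Finset.mem_univ _, hfy⟩
      have := hx₀min y hyS
      linarith
    by_cases hx1 : x₀.1 = 1
    · have h1 := hFmax z hz
      have h2 := hx₀min z (by rw [hSf, Finset.mem_filter]; exact ⟨Finset.mem_univ _, hfz⟩)
      rw [hx1] at h2
      linarith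
    · have hmem := hwcomp f hf x₀ hsupp
      rw [hzero x₀ hx1, Submodule.mem_bot] at hmem
      rw [hSf, Finset.mem_filter] at hx₀S
      exact hx₀S.2 hmem
  -- the identity coset
  have one_min : D.IsMinRep PiM 1 := StmtAux.one_minrep D PiM
  set o : D.JM PiM := ⟨1, one_min⟩ with ho
  have ho1 : (o.1 : D.W) = 1 := rfl
  -- the diagonal action on the identity component
  have hdiag : ∀ (u : U) (ω : D.VC),
      πI (D.θ ω) (Pi.single o u) = Pi.single o ((σ (D.θM PiM ω)) u) := by
    intro u ω
    rw [hπI.2 ω o u]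
    have hfe : D.posRoots.filter (fun β => -(D.actV (o.1)⁻¹ β) ∈ D.posRoots) = ∅ := by
      rw [Finset.filter_eq_empty_iff]
      intro β hβ
      rw [ho1, inv_one, StmtAux.actV_one]
      exact D.posRoots_not_neg β hβ
    rw [hfe]
    have hω : D.actVC (o.1)⁻¹ ω = ω := by
      rw [ho1, inv_one, StmtAux.actVC_one]
    rw [hω]
    simp
  have hdiagn : ∀ (u : U) (ω : D.VC) (n : ℕ),
      ((πI (D.θ ω) - D.pairC ω μ • 1) ^ n) (Pi.single o u)
        = Pi.single o (((σ (D.θM PiM ω) - D.pairC ω μ • 1) ^ n) u) := by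
    intro u ω n
    induction n generalizing u with
    | zero => rw [pow_zero, pow_zero, Module.End.one_apply, Module.End.one_apply]
    | succ n ih =>
      rw [pow_succ, pow_succ, Module.End.mul_apply, Module.End.mul_apply]
      have h1 : (πI (D.θ ω) - D.pairC ω μ • 1) (Pi.single o u)
          = Pi.single o ((σ (D.θM PiM ω) - D.pairC ω μ • 1) u) := by
        rw [LinearMap.sub_apply, LinearMap.smul_apply, Module.End.one_apply, hdiag u ω]
        rw [LinearMap.sub_apply, LinearMap.smul_apply, Module.End.one_apply]
        rw [Pi.single_sub, Pi.single_smul]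
      rw [h1, ih]
  -- evaluation at the identity coset lands in the weight space of U
  have hto : ∀ f : D.JM PiM → U, f ∈ D.wtH πI μ →
      f o ∈ D.wtAux (fun ω => σ (D.θM PiM ω)) μ := by
    intro f hf
    have h := hwcomp f hf o (fun z hz =>
      hsupp1 f hf z (fun h1 => by
        rw [hFdef, hFdef, h1, ho1] at hz
        exact lt_irrefl _ hz))
    have ho2 : D.actVdC (o.1)⁻¹ μ = μ := by
      rw [ho1, inv_one, StmtAux.actVdC_one]
    rw [ho2] at h
    exact h
  -- the linear equivalence
  let φ : (D.wtH πI μ) →ₗ[ℂ] (D.wtAux (fun ω => σ (D.θM PiM ω)) μ) :=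
    { toFun := fun f => ⟨f.1 o, hto f.1 f.2⟩
      map_add' := by
        intro f g
        apply Subtype.ext
        simp
      map_smul' := by
        intro c f
        apply Subtype.ext
        simp }
  have hinj : Function.Injective φ := by
    intro f g hfg
    apply Subtype.ext
    funext z
    by_cases hz : z.1 = 1
    · have hzo : z = o := Subtype.ext hz
      rw [hzo]
      exact congrArg Subtype.val hfg
    · rw [hsupp1 f.1 f.2 z hz, hsupp1 g.1 g.2 z hz]
  have hsurj : Function.Surjective φ := by
    intro v
    have hmem : (Pi.single o v.1 : D.JM PiM → U) ∈ D.wtH πI μ := by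
      rw [StmtAux.mem_wtH]
      intro ω
      obtain ⟨n, hn⟩ := (StmtAux.mem_wtAux D _ μ v.1).mp v.2 ω
      refine ⟨n, ?_⟩
      rw [hdiagn v.1 ω n, hn, Pi.single_zero]
    refine ⟨⟨Pi.single o v.1, hmem⟩, ?_⟩
    apply Subtype.ext
    show (Pi.single o v.1 : D.JM PiM → U) o = v.1
    simp
  exact LinearEquiv.finrank_eq (LinearEquiv.ofBijective φ ⟨hinj, hsurj⟩)
end
end
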